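/- arXiv:2605.23757 — 7 statements merged into one kernel-verified Lean document; each statement's English description precedes it below -/
import Mathlib

section
/- Let m ≥ 1 be an integer, θ ≥ 1 a real number, p ∈ (0,1), and let y_1, …, y_m be positive real numbers with Σ_{i=1}^m y_i = 1. If u_1, …, u_m ∈ (0,1] satisfy u_i ≥ p^{y_i^{1/θ}} for every i, then exp(−(Σ_{i=1}^m (−ln u_i)^θ)^{1/θ}) ≥ p; moreover, equality exp(−(Σ_{i=1}^m (−ln u_i)^θ)^{1/θ}) = p holds when u_i = p^{y_i^{1/θ}} for all i. -/
open Finset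

/-- Gumbel–Hougaard copula computation: if each `u i` is at least `p ^ (y i ^ (1/θ))`
with positive weights `y` summing to one, then the copula value is at least `p`,
with equality when `u i = p ^ (y i ^ (1/θ))` for all `i`. -/
theorem stmt_0 (m : ℕ) (hm : 1 ≤ m) (θ p : ℝ) (hθ : 1 ≤ θ)
    (hp : p ∈ Set.Ioo (0:ℝ) 1) (y u : Fin m → ℝ)
    (hy : ∀ i, 0 < y i) (hsum : ∑ i, y i = 1)
    (hu : ∀ i, u i ∈ Set.Ioc (0:ℝ) 1)
    (hge : ∀ i, p ^ (y i ^ (1/θ)) ≤ u i) :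
    p ≤ Real.exp (-(∑ i, (-Real.log (u i)) ^ θ) ^ (1/θ)) ∧
      ((∀ i, u i = p ^ (y i ^ (1/θ))) →
        Real.exp (-(∑ i, (-Real.log (u i)) ^ θ) ^ (1/θ)) = p) := by
  obtain ⟨hp0, hp1⟩ := hp
  have hθ0 : (0:ℝ) < θ := lt_of_lt_of_le one_pos hθ
  set L : ℝ := -Real.log p with hL
  have hL0 : 0 < L := by
    have := Real.log_neg hp0 hp1
    simp [hL]; linarith
  have hnn : ∀ i, 0 ≤ -Real.log (u i) := fun i => by
    have := Real.log_nonpos (le_of_lt (hu i).1) (hu i).2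
    linarith
  have key : ∀ i, -Real.log (u i) ≤ L * y i ^ (1/θ) := by
    intro i
    have hlog : Real.log (p ^ (y i ^ (1/θ))) ≤ Real.log (u i) :=
      Real.log_le_log (Real.rpow_pos_of_pos hp0 _) (hge i)
    rw [Real.log_rpow hp0] at hlog
    nlinarith [hlog]
  have hsum_le : ∑ i, (-Real.log (u i)) ^ θ ≤ L ^ θ := by
    calc ∑ i, (-Real.log (u i)) ^ θ ≤ ∑ i, L ^ θ * y i := by
          apply Finset.sum_le_sum
          intro i _
          have h1 : (-Real.log (u i)) ^ θ ≤ (L * y i ^ (1/θ)) ^ θ :=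
            Real.rpow_le_rpow (hnn i) (key i) hθ0.le
          have h2 : (L * y i ^ (1/θ)) ^ θ = L ^ θ * y i := by
            rw [Real.mul_rpow hL0.le (Real.rpow_nonneg (hy i).le _),
              ← Real.rpow_mul (hy i).le, one_div, inv_mul_cancel₀ (ne_of_gt hθ0),
              Real.rpow_one]
          linarith
      _ = L ^ θ := by rw [← Finset.mul_sum, hsum, mul_one]
  have hsum_nn : 0 ≤ ∑ i, (-Real.log (u i)) ^ θ :=
    Finset.sum_nonneg fun i _ => Real.rpow_nonneg (hnn i) _
  have hroot : (∑ i, (-Real.log (u i)) ^ θ) ^ (1/θ) ≤ L := by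
    calc (∑ i, (-Real.log (u i)) ^ θ) ^ (1/θ) ≤ (L ^ θ) ^ (1/θ) :=
          Real.rpow_le_rpow hsum_nn hsum_le (by positivity)
      _ = L := by
          rw [← Real.rpow_mul hL0.le, mul_one_div, div_self (ne_of_gt hθ0), Real.rpow_one]
  constructor
  · calc p = Real.exp (Real.log p) := (Real.exp_log hp0).symm
      _ ≤ Real.exp (-(∑ i, (-Real.log (u i)) ^ θ) ^ (1/θ)) := by
          apply Real.exp_le_exp.mpr
          have : Real.log p = -L := by simp [hL]
          rw [this]; linarith
  · intro heq
    have hsum_eq : ∑ i, (-Real.log (u i)) ^ θ = L ^ θ := by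
      have : ∀ i, (-Real.log (u i)) ^ θ = L ^ θ * y i := by
        intro i
        rw [heq i, Real.log_rpow hp0]
        have h3 : -(y i ^ (1/θ) * Real.log p) = L * y i ^ (1/θ) := by
          simp only [hL]; ring
        rw [h3, Real.mul_rpow hL0.le (Real.rpow_nonneg (hy i).le _),
          ← Real.rpow_mul (hy i).le, one_div, inv_mul_cancel₀ (ne_of_gt hθ0),
          Real.rpow_one]
      rw [Finset.sum_congr rfl fun i _ => this i, ← Finset.mul_sum, hsum, mul_one]
    rw [hsum_eq, ← Real.rpow_mul hL0.le, mul_one_div, div_self (ne_of_gt hθ0), Real.rpow_one]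
    simp [hL, Real.exp_log hp0]
end

section
/- Let p ∈ (0,1), μ ∈ ℝ, and σ > 0. Then the following are equivalent: (i) every probability measure ν on ℝ with mean ∫x dν(x) = μ and variance ∫(x−μ)² dν(x) = σ² satisfies ν((−∞, 0]) ≥ p; (ii) √(p/(1−p)) · σ + μ ≤ 0. -/
open MeasureTheory

open scoped ENNReal

open MeasureTheory

-- two-point measure lemmas
lemma tp_int (a b q : ℝ) (hq0 : 0 ≤ q) (hq1 : q ≤ 1) (f : ℝ → ℝ) :
    ∫ x, f x ∂(ENNReal.ofReal q • Measure.dirac a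
        + ENNReal.ofReal (1 - q) • Measure.dirac b) = q * f a + (1 - q) * f b := by
  have hIa : Integrable f (Measure.dirac a) :=
    (integrable_const (f a)).congr (ae_eq_dirac f).symm
  have hIb : Integrable f (Measure.dirac b) :=
    (integrable_const (f b)).congr (ae_eq_dirac f).symm
  rw [integral_add_measure (hIa.smul_measure ENNReal.ofReal_ne_top)
    (hIb.smul_measure ENNReal.ofReal_ne_top), integral_smul_measure,
    integral_smul_measure, integral_dirac, integral_dirac,
    ENNReal.toReal_ofReal hq0, ENNReal.toReal_ofReal (by linarith)]
  simp [smul_eq_mul]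

lemma tp_prob (a b q : ℝ) (hq0 : 0 ≤ q) (hq1 : q ≤ 1) :
    IsProbabilityMeasure (ENNReal.ofReal q • Measure.dirac a
        + ENNReal.ofReal (1 - q) • Measure.dirac b) := by
  constructor
  simp only [Measure.add_apply, Measure.smul_apply, smul_eq_mul, measure_univ, mul_one]
  rw [← ENNReal.ofReal_add hq0 (by linarith)]
  norm_num

lemma tp_memL2 (a b q : ℝ) (hq0 : 0 ≤ q) (hq1 : q ≤ 1) :
    MemLp id 2 (ENNReal.ofReal q • Measure.dirac a
        + ENNReal.ofReal (1 - q) • Measure.dirac b) := by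
  set ν : Measure ℝ := ENNReal.ofReal q • Measure.dirac a
      + ENNReal.ofReal (1 - q) • Measure.dirac b with hν
  have : IsProbabilityMeasure ν := tp_prob a b q hq0 hq1
  have hsupp : ν ({a, b} : Set ℝ)ᶜ = 0 := by
    rw [hν, Measure.add_apply, Measure.smul_apply, Measure.smul_apply,
      Measure.dirac_apply, Measure.dirac_apply,
      Set.indicator_of_notMem (by simp), Set.indicator_of_notMem (by simp)]
    simp
  have hae : ∀ᵐ x ∂ν, ‖id x‖ ≤ max |a| |b| := by
    have h2 : ∀ᵐ x ∂ν, x ∈ ({a, b} : Set ℝ) := by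
      refine ae_iff.mpr ?_
      convert hsupp using 2
      ext; simp
    filter_upwards [h2] with x hx
    rcases hx with h | h
    · subst h
      simpa [Real.norm_eq_abs] using le_max_left |a| |b|
    · rw [Set.mem_singleton_iff] at h
      subst h
      simpa [Real.norm_eq_abs] using le_max_right |a| |b|
  exact MemLp.of_bound measurable_id.aestronglyMeasurable _ hae

lemma tp_Iic (a b q : ℝ) (hq0 : 0 ≤ q) (hb : 0 < b) :
    ((ENNReal.ofReal q • Measure.dirac a
        + ENNReal.ofReal (1 - q) • Measure.dirac b) (Set.Iic 0)).toReal ≤ q := by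
  have hb' : b ∉ Set.Iic (0:ℝ) := by simp [not_le.mpr hb]
  have hind : (Set.Iic (0:ℝ)).indicator (1 : ℝ → ℝ≥0∞) a ≤ 1 := by
    by_cases h : a ∈ Set.Iic (0:ℝ) <;> simp [Set.indicator, h]
  have h1 : (ENNReal.ofReal q • Measure.dirac a
      + ENNReal.ofReal (1 - q) • Measure.dirac b) (Set.Iic 0) ≤ ENNReal.ofReal q := by
    rw [Measure.add_apply, Measure.smul_apply, Measure.smul_apply,
      Measure.dirac_apply, Measure.dirac_apply, Set.indicator_of_notMem hb']
    simp only [smul_eq_mul, mul_zero, add_zero]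
    calc ENNReal.ofReal q * (Set.Iic (0:ℝ)).indicator 1 a
        ≤ ENNReal.ofReal q * 1 := by gcongr
      _ = ENNReal.ofReal q := mul_one _
  calc ((ENNReal.ofReal q • Measure.dirac a
        + ENNReal.ofReal (1 - q) • Measure.dirac b) (Set.Iic 0)).toReal
      ≤ (ENNReal.ofReal q).toReal := ENNReal.toReal_mono ENNReal.ofReal_ne_top h1
    _ = q := ENNReal.toReal_ofReal hq0

set_option maxHeartbeats 1000000 in
/-- One-sided Chebyshev (Marshall–Olkin) equivalence: every distribution on ℝ with
mean `m` and variance `σ²` puts mass at least `p` on `(−∞,0]` iff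
`√(p/(1−p))·σ + m ≤ 0`. -/
theorem stmt_6 (p m σ : ℝ) (hp : p ∈ Set.Ioo (0:ℝ) 1) (hσ : 0 < σ) :
    (∀ ν : Measure ℝ, IsProbabilityMeasure ν → MemLp id 2 ν →
      (∫ x, x ∂ν) = m → (∫ x, (x - m) ^ 2 ∂ν) = σ ^ 2 →
      p ≤ (ν (Set.Iic 0)).toReal)
    ↔ Real.sqrt (p / (1 - p)) * σ + m ≤ 0 := by
  obtain ⟨hp0, hp1⟩ := hp
  have hc0 : (0:ℝ) < p / (1 - p) := div_pos hp0 (by linarith)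
  have hs0 : 0 < Real.sqrt (p / (1 - p)) * σ :=
    mul_pos (Real.sqrt_pos.mpr hc0) hσ
  constructor
  · intro H
    by_contra hlt
    push_neg at hlt
    set s0 := Real.sqrt (p / (1 - p)) * σ with hs0def
    set t : ℝ := (max 0 (-m) + s0) / 2 with htdef
    have ht0 : 0 < t := by
      have := le_max_left 0 (-m); rw [htdef]; linarith
    have htm : 0 < m + t := by
      have := le_max_right 0 (-m); rw [htdef]; linarith
    have hts : t < s0 := by
      have h1 : max 0 (-m) < s0 := max_lt hs0 (by linarith)
      rw [htdef]; linarith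
    have hts2 : t ^ 2 < p / (1 - p) * σ ^ 2 := by
      have hsq : s0 ^ 2 = p / (1 - p) * σ ^ 2 := by
        rw [hs0def, mul_pow, Real.sq_sqrt hc0.le]
      nlinarith
    set q : ℝ := t ^ 2 / (t ^ 2 + σ ^ 2) with hqdef
    have hA : 0 < t ^ 2 + σ ^ 2 := by positivity
    have hq0 : 0 ≤ q := by positivity
    have hq1 : q ≤ 1 := by rw [hqdef, div_le_one hA]; nlinarith
    have hqp : q < p := by
      rw [hqdef, div_lt_iff₀ hA]
      have hdp : (1 - p) * (p / (1 - p) * σ ^ 2) = p * σ ^ 2 := by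
        rw [← mul_assoc, mul_div_cancel₀ _ (show (1:ℝ) - p ≠ 0 by linarith)]
      nlinarith [mul_lt_mul_of_pos_left hts2 (show (0:ℝ) < 1 - p by linarith)]
    set a : ℝ := m - σ ^ 2 / t with hadef
    set b : ℝ := m + t with hbdef
    have hmean : (∫ x, x ∂(ENNReal.ofReal q • Measure.dirac a
        + ENNReal.ofReal (1 - q) • Measure.dirac b)) = m := by
      rw [tp_int a b q hq0 hq1 (fun x => x), hqdef, hadef, hbdef]
      field_simp
      ring
    have hvar : (∫ x, (x - m) ^ 2 ∂(ENNReal.ofReal q • Measure.dirac a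
        + ENNReal.ofReal (1 - q) • Measure.dirac b)) = σ ^ 2 := by
      rw [tp_int a b q hq0 hq1 (fun x => (x - m) ^ 2), hqdef, hadef, hbdef]
      field_simp
      ring
    have hH := H _ (tp_prob a b q hq0 hq1) (tp_memL2 a b q hq0 hq1) hmean hvar
    have hle := tp_Iic a b q hq0 htm
    linarith
  · intro hle ν hprob h2 hmean hvar
    have hm0 : m < 0 := by nlinarith
    have hm2 : p * σ ^ 2 ≤ (1 - p) * m ^ 2 := by
      have h1 : Real.sqrt (p / (1 - p)) * σ ≤ -m := by linarith
      have h2' : (Real.sqrt (p / (1 - p)) * σ) ^ 2 ≤ m ^ 2 := by nlinarith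
      rw [mul_pow, Real.sq_sqrt hc0.le] at h2'
      have hdp : (1 - p) * (p / (1 - p) * σ ^ 2) = p * σ ^ 2 := by
        rw [← mul_assoc, mul_div_cancel₀ _ (show (1:ℝ) - p ≠ 0 by linarith)]
      nlinarith [mul_le_mul_of_nonneg_left h2' (show (0:ℝ) ≤ 1 - p by linarith)]
    have hI2 : Integrable (fun x => x ^ 2) ν := h2.integrable_sq
    have hI1 : Integrable (fun x => x) ν := h2.integrable one_le_two
    have hx2 : ∫ x, x ^ 2 ∂ν = σ ^ 2 + m ^ 2 := by
      have he : (fun x : ℝ => (x - m) ^ 2)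
          = fun x => (x ^ 2 - 2 * m * x) + m ^ 2 := by funext x; ring
      rw [he] at hvar
      have hIa : Integrable (fun x : ℝ => x ^ 2 - 2 * m * x) ν :=
        hI2.sub (hI1.const_mul (2 * m))
      have hIb : Integrable (fun x : ℝ => 2 * m * x) ν := hI1.const_mul (2 * m)
      rw [integral_add hIa (integrable_const _),
        integral_sub hI2 hIb, integral_const_mul, hmean] at hvar
      simp only [integral_const, measure_univ, probReal_univ, ENNReal.toReal_one, one_smul] at hvar
      linarith
    set A : ℝ := σ ^ 2 + m ^ 2 with hAdef
    have hApos : 0 < A := by positivity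
    set u : ℝ := A / (-m) with hudef
    have hu0 : 0 < u := div_pos hApos (by linarith)
    have hIf : Integrable (fun x => (x + u) ^ 2) ν := by
      have he : (fun x : ℝ => (x + u) ^ 2)
          = fun x => x ^ 2 + (2 * u * x + u ^ 2) := by funext x; ring
      rw [he]
      exact hI2.add ((hI1.const_mul (2 * u)).add (integrable_const _))
    have hint : ∫ x, (x + u) ^ 2 ∂ν = A + 2 * u * m + u ^ 2 := by
      have he : (fun x : ℝ => (x + u) ^ 2)
          = fun x => x ^ 2 + (2 * u * x + u ^ 2) := by funext x; ring
      have hIc : Integrable (fun x : ℝ => 2 * u * x) ν := hI1.const_mul (2 * u)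
      have hId : Integrable (fun x : ℝ => 2 * u * x + u ^ 2) ν :=
        hIc.add (integrable_const _)
      rw [he, integral_add hI2 hId, integral_add hIc (integrable_const _),
        integral_const_mul, hmean, hx2]
      simp only [integral_const, measure_univ, probReal_univ, ENNReal.toReal_one, one_smul]
      rw [hAdef]; ring
    have hmarkov : u ^ 2 * (ν (Set.Ioi 0)).toReal ≤ A + 2 * u * m + u ^ 2 := by
      rw [← hint]
      have hmono : ∀ x : ℝ,
          (Set.Ioi (0:ℝ)).indicator (fun _ => u ^ 2) x ≤ (x + u) ^ 2 := by
        intro x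
        by_cases hx : x ∈ Set.Ioi (0:ℝ)
        · rw [Set.indicator_of_mem hx]
          have hx0 : 0 < x := hx
          nlinarith
        · rw [Set.indicator_of_notMem hx]; positivity
      calc u ^ 2 * (ν (Set.Ioi 0)).toReal
          = ∫ x, (Set.Ioi (0:ℝ)).indicator (fun _ => u ^ 2) x ∂ν := by
            rw [integral_indicator_const _ measurableSet_Ioi, smul_eq_mul, measureReal_def]; ring
        _ ≤ ∫ x, (x + u) ^ 2 ∂ν :=
            integral_mono ((integrable_const _).indicator measurableSet_Ioi) hIf hmono
    set r := (ν (Set.Iic 0)).toReal with hrdef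
    set s := (ν (Set.Ioi 0)).toReal with hsdef
    have hsplit : r + s = 1 := by
      have hd : Disjoint (Set.Iic (0:ℝ)) (Set.Ioi 0) := Set.Iic_disjoint_Ioi le_rfl
      have h1 : ν (Set.Iic 0) + ν (Set.Ioi 0) = 1 := by
        rw [← measure_union hd measurableSet_Ioi, Set.Iic_union_Ioi, measure_univ]
      have := congrArg ENNReal.toReal h1
      rw [ENNReal.toReal_add (measure_ne_top _ _) (measure_ne_top _ _)] at this
      simpa using this
    have hmne : m ≠ 0 := hm0.ne
    have e1 : u ^ 2 * m ^ 2 = A ^ 2 := by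
      rw [hudef]; field_simp
    have hum : u * m = -A := by
      rw [hudef, div_mul_eq_mul_div, div_neg, mul_div_assoc, div_self hmne, mul_one]
    have e2 : (A + 2 * u * m + u ^ 2) * m ^ 2 = A * σ ^ 2 := by
      linear_combination (u * m - A + 2 * m ^ 2) * hum + A * hAdef
    have key : A ^ 2 * s ≤ A * σ ^ 2 := by
      calc A ^ 2 * s = (u ^ 2 * m ^ 2) * s := by rw [e1]
        _ = (u ^ 2 * s) * m ^ 2 := by ring
        _ ≤ (A + 2 * u * m + u ^ 2) * m ^ 2 :=
            mul_le_mul_of_nonneg_right hmarkov (sq_nonneg m)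
        _ = A * σ ^ 2 := e2
    have h4 : σ ^ 2 ≤ A * (1 - p) := by rw [hAdef]; nlinarith
    have h5 : A * σ ^ 2 ≤ A ^ 2 * (1 - p) := by
      nlinarith [mul_le_mul_of_nonneg_left h4 hApos.le]
    have h6 : s ≤ 1 - p :=
      le_of_mul_le_mul_left (by nlinarith [key, h5]) (by positivity : (0:ℝ) < A ^ 2)
    linarith
end

section
/- Let p ∈ (0,1), let μ_d ∈ ℂ^m, let Γ_d ∈ ℂ^{m×m} be Hermitian and J_d ∈ ℂ^{m×m} be symmetric, and suppose there exists at least one random vector in ℂ^m with mean μ_d, covariance matrix Γ_d, and pseudo-covariance matrix J_d. Fix z̃ ∈ ℂ^m and set μ_φ = Re(Σ_j μ_{d,j} z̃_j) and σ_φ² = (1/2)(Σ_{j,k} z̃_j · conj(z̃_k) · (Γ_d)_{jk} + Re(Σ_{j,k} z̃_j z̃_k (J_d)_{jk})), and assume σ_φ > 0. Then the following are equivalent: (i) every random vector d in ℂ^m (on any probability space) with mean μ_d, covariance Γ_d, and pseudo-covariance J_d satisfies P[Re(Σ_j d_j z̃_j) ≤ 0] ≥ p; (ii) √(p/(1−p))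 · σ_φ + μ_φ ≤ 0. -/
open MeasureTheory ProbabilityTheory Finset

variable {Ω : Type*} [MeasurableSpace Ω] {P : Measure Ω}

lemma int_mul_L2 {f g : Ω → ℂ} (hf : MemLp f 2 P) (hg : MemLp g 2 P) :
    Integrable (fun ω => f ω * g ω) P := by
  rw [← memLp_one_iff_integrable]
  have := hg.smul (r := 1) hf
  exact this

lemma int_mul_L2' {f g : Ω → ℝ} (hf : MemLp f 2 P) (hg : MemLp g 2 P) :
    Integrable (fun ω => f ω * g ω) P := by
  rw [← memLp_one_iff_integrable]
  have := hg.smul (r := 1) hf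
  exact this

lemma memL2_conj {f : Ω → ℂ} (hf : MemLp f 2 P) :
    MemLp (fun ω => (starRingEnd ℂ) (f ω)) 2 P := by
  have : LipschitzWith 1 (starRingEnd ℂ) := Complex.isometry_conj.lipschitz
  exact this.comp_memLp (by simp) hf

lemma re_sq (a : ℂ) : (a.re)^2 = ((a*a).re + (a * (starRingEnd ℂ) a).re)/2 := by
  simp [Complex.mul_re, Complex.conj_re, Complex.conj_im]; ring

lemma momentA {m : ℕ} (μd : Fin m → ℂ) (Γ J : Matrix (Fin m) (Fin m) ℂ) (z : Fin m → ℂ)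
    (σφsq : ℝ)
    (hσφ : σφsq = (1/2) * ((∑ j, ∑ k, z j * star (z k) * Γ j k).re
        + (∑ j, ∑ k, z j * z k * J j k).re))
    [IsProbabilityMeasure P]
    (d : Ω → Fin m → ℂ)
    (hL2 : ∀ j, MemLp (fun ω => d ω j) 2 P)
    (hmean : ∀ j, (∫ ω, d ω j ∂P) = μd j)
    (hΓm : ∀ j k, (∫ ω, (d ω j - μd j) * star (d ω k - μd k) ∂P) = Γ j k)
    (hJm : ∀ j k, (∫ ω, (d ω j - μd j) * (d ω k - μd k) ∂P) = J j k) :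
    MemLp (fun ω => ∑ j, (d ω j - μd j) * z j) 2 P ∧
    (∫ ω, (∑ j, (d ω j - μd j) * z j) ∂P) = 0 ∧
    (∫ ω, ((∑ j, (d ω j - μd j) * z j).re)^2 ∂P) = σφsq := by
  have hY2 : ∀ j, MemLp (fun ω => d ω j - μd j) 2 P :=
    fun j => (hL2 j).sub (memLp_const _)
  have hYz2 : ∀ j, MemLp (fun ω => (d ω j - μd j) * z j) 2 P := by
    intro j
    have := (hY2 j).const_mul (z j)
    simpa [mul_comm] using this
  have hw2 : MemLp (fun ω => ∑ j, (d ω j - μd j) * z j) 2 P := by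
    exact memLp_finset_sum (μ := P) Finset.univ
      (f := fun j ω => (d ω j - μd j) * z j) (fun j _ => hYz2 j)
  have hYint : ∀ j, (∫ ω, (d ω j - μd j) ∂P) = 0 := by
    intro j
    rw [integral_sub ((hL2 j).integrable one_le_two) (integrable_const _)]
    simp [hmean j]
  have hwmean : (∫ ω, (∑ j, (d ω j - μd j) * z j) ∂P) = 0 := by
    rw [integral_finset_sum _ (fun j _ => ((hYz2 j).integrable one_le_two))]
    refine Finset.sum_eq_zero fun j _ => ?_
    rw [integral_mul_const, hYint j, zero_mul]
  refine ⟨hw2, hwmean, ?_⟩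
  -- second moment
  have hww : Integrable (fun ω => (∑ j, (d ω j - μd j) * z j) * (∑ j, (d ω j - μd j) * z j)) P :=
    int_mul_L2 hw2 hw2
  have hwcw : Integrable (fun ω => (∑ j, (d ω j - μd j) * z j) *
      (starRingEnd ℂ) (∑ j, (d ω j - μd j) * z j)) P :=
    int_mul_L2 hw2 (memL2_conj hw2)
  have h1 : (∫ ω, (∑ j, (d ω j - μd j) * z j) * (∑ j, (d ω j - μd j) * z j) ∂P)
      = ∑ j, ∑ k, z j * z k * J j k := by
    have hptwise : ∀ ω, (∑ j, (d ω j - μd j) * z j) * (∑ j, (d ω j - μd j) * z j)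
        = ∑ j, ∑ k, z j * z k * ((d ω j - μd j) * (d ω k - μd k)) := by
      intro ω
      rw [Finset.sum_mul_sum]
      exact Finset.sum_congr rfl fun j _ => Finset.sum_congr rfl fun k _ => by ring
    simp_rw [hptwise]
    rw [integral_finset_sum _ (fun j _ => ?_)]
    · refine Finset.sum_congr rfl fun j _ => ?_
      rw [integral_finset_sum _ (fun k _ => ?_)]
      · refine Finset.sum_congr rfl fun k _ => ?_
        rw [integral_const_mul, hJm j k]
      · exact (int_mul_L2 (hY2 j) (hY2 k)).const_mul _
    · apply integrable_finset_sum
      intro k _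
      exact (int_mul_L2 (hY2 j) (hY2 k)).const_mul _
  have h2 : (∫ ω, (∑ j, (d ω j - μd j) * z j) *
      (starRingEnd ℂ) (∑ j, (d ω j - μd j) * z j) ∂P)
      = ∑ j, ∑ k, z j * star (z k) * Γ j k := by
    have hptwise : ∀ ω, (∑ j, (d ω j - μd j) * z j) *
        (starRingEnd ℂ) (∑ j, (d ω j - μd j) * z j)
        = ∑ j, ∑ k, z j * star (z k) * ((d ω j - μd j) * star (d ω k - μd k)) := by
      intro ω
      rw [map_sum, Finset.sum_mul_sum]
      refine Finset.sum_congr rfl fun j _ => Finset.sum_congr rfl fun k _ => ?_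
      simp only [map_mul, starRingEnd_apply]
      ring
    simp_rw [hptwise]
    rw [integral_finset_sum _ (fun j _ => ?_)]
    · refine Finset.sum_congr rfl fun j _ => ?_
      rw [integral_finset_sum _ (fun k _ => ?_)]
      · refine Finset.sum_congr rfl fun k _ => ?_
        rw [integral_const_mul, hΓm j k]
      · exact (int_mul_L2 (hY2 j) (memL2_conj (hY2 k))).const_mul _
    · apply integrable_finset_sum
      intro k _
      exact (int_mul_L2 (hY2 j) (memL2_conj (hY2 k))).const_mul _
  have hsq : ∀ ω, ((∑ j, (d ω j - μd j) * z j).re)^2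
      = (((∑ j, (d ω j - μd j) * z j) * (∑ j, (d ω j - μd j) * z j)).re
        + ((∑ j, (d ω j - μd j) * z j) * (starRingEnd ℂ) (∑ j, (d ω j - μd j) * z j)).re)/2 :=
    fun ω => re_sq _
  simp_rw [hsq]
  rw [integral_div]
  simp_rw [← RCLike.re_to_complex]
  rw [integral_add hww.re hwcw.re, integral_re hww, integral_re hwcw, h1, h2, hσφ]
  simp [RCLike.re_to_complex]
  ring

lemma cantelli [IsProbabilityMeasure P] {X : Ω → ℝ} (hX : MemLp X 2 P) {σ2 t : ℝ}
    (hmean : (∫ ω, X ω ∂P) = 0) (hvar : (∫ ω, (X ω)^2 ∂P) = σ2) (ht : 0 < t) :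
    (P {ω | t ≤ X ω}).toReal ≤ σ2 / (σ2 + t^2) := by
  have hXsq : Integrable (fun ω => (X ω)^2) P := by
    have := int_mul_L2' hX hX
    simpa [pow_two] using this
  have hσ2 : 0 ≤ σ2 := by
    rw [← hvar]; exact integral_nonneg fun ω => sq_nonneg _
  set u : ℝ := σ2 / t with hu
  have hu0 : 0 ≤ u := div_nonneg hσ2 ht.le
  have htu : 0 < t + u := by linarith
  have hYsq : Integrable (fun ω => (X ω + u)^2) P := by
    have : (fun ω => (X ω + u)^2) = fun ω => (X ω)^2 + (2*u) * X ω + u^2 := by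
      funext ω; ring
    rw [this]
    exact ((hXsq.add ((hX.integrable one_le_two).const_mul _)).add (integrable_const _))
  have hEY : (∫ ω, (X ω + u)^2 ∂P) = σ2 + u^2 := by
    have : (fun ω => (X ω + u)^2) = fun ω => (X ω)^2 + (2*u) * X ω + u^2 := by
      funext ω; ring
    rw [this]
    rw [integral_add (f := fun ω => X ω ^ 2 + 2 * u * X ω) (g := fun _ => u ^ 2)
      (hXsq.add ((hX.integrable one_le_two).const_mul _)) (integrable_const _)]
    rw [integral_add (f := fun ω => X ω ^ 2) (g := fun ω => 2 * u * X ω)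
      hXsq ((hX.integrable one_le_two).const_mul _)]
    rw [integral_const_mul, hmean, hvar]
    simp
  have hmarkov := mul_meas_ge_le_integral_of_nonneg
    (f := fun ω => (X ω + u)^2) (Filter.Eventually.of_forall fun ω => sq_nonneg _) hYsq ((t+u)^2)
  rw [hEY] at hmarkov
  have hsub : {ω | t ≤ X ω} ⊆ {ω | (t+u)^2 ≤ (X ω + u)^2} := by
    intro ω hω
    have h1 : t + u ≤ X ω + u := by simp only [Set.mem_setOf_eq] at hω; linarith
    exact pow_le_pow_left₀ htu.le h1 2
  have hmono : (P {ω | t ≤ X ω}).toReal ≤ (P {ω | (t+u)^2 ≤ (X ω + u)^2}).toReal :=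
    ENNReal.toReal_mono (measure_ne_top P _) (measure_mono hsub)
  have h2 : (t+u)^2 * (P {ω | t ≤ X ω}).toReal ≤ σ2 + u^2 :=
    le_trans (by simp only [measureReal_def]; nlinarith [ENNReal.toReal_nonneg (a := P {ω | t ≤ X ω})]) hmarkov
  have h3 : (P {ω | t ≤ X ω}).toReal ≤ (σ2 + u^2) / (t+u)^2 := by
    rw [le_div_iff₀ (by positivity)]
    linarith [h2]
  refine h3.trans (le_of_eq ?_)
  rw [hu]
  field_simp
  ring

lemma backward {m : ℕ} (p : ℝ) (hp : p ∈ Set.Ioo (0:ℝ) 1)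
    (μd : Fin m → ℂ) (Γ J : Matrix (Fin m) (Fin m) ℂ) (z : Fin m → ℂ)
    (μφ : ℝ) (hμφ : μφ = (∑ j, μd j * z j).re)
    (σφsq : ℝ)
    (hσφ : σφsq = (1/2) * ((∑ j, ∑ k, z j * star (z k) * Γ j k).re
        + (∑ j, ∑ k, z j * z k * J j k).re))
    (hpos : 0 < σφsq)
    (hineq : Real.sqrt (p / (1 - p)) * Real.sqrt σφsq + μφ ≤ 0)
    [IsProbabilityMeasure P] (d : Ω → Fin m → ℂ)
    (hL2 : ∀ j, MemLp (fun ω => d ω j) 2 P)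
    (hmean : ∀ j, (∫ ω, d ω j ∂P) = μd j)
    (hΓm : ∀ j k, (∫ ω, (d ω j - μd j) * star (d ω k - μd k) ∂P) = Γ j k)
    (hJm : ∀ j k, (∫ ω, (d ω j - μd j) * (d ω k - μd k) ∂P) = J j k) :
    p ≤ (P {ω | (∑ j, d ω j * z j).re ≤ 0}).toReal := by
  obtain ⟨hw2, hwmean, hwvar⟩ := momentA μd Γ J z σφsq hσφ d hL2 hmean hΓm hJm
  set φt : Ω → ℝ := fun ω => (∑ j, (d ω j - μd j) * z j).re with hφt
  have hφ2 : MemLp φt 2 P := by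
    have := hw2.re
    simpa [RCLike.re_to_complex, hφt] using this
  have hφmean : (∫ ω, φt ω ∂P) = 0 := by
    rw [hφt]
    simp_rw [← RCLike.re_to_complex]
    rw [integral_re (hw2.integrable one_le_two)]
    rw [hwmean]
    simp
  -- positivity facts
  have hp0 := hp.1
  have hp1 := hp.2
  have ht0 : 0 < p / (1 - p) := div_pos hp0 (by linarith)
  have hst0 : 0 < Real.sqrt (p / (1 - p)) := Real.sqrt_pos.2 ht0
  have hss : 0 < Real.sqrt σφsq := Real.sqrt_pos.2 hpos
  have hμφneg : μφ < 0 := by nlinarith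
  -- pointwise decomposition
  have hpoint : ∀ ω, (∑ j, d ω j * z j).re = φt ω + μφ := by
    intro ω
    rw [hμφ, hφt, ← Complex.add_re]
    congr 1
    rw [← Finset.sum_add_distrib]
    exact Finset.sum_congr rfl fun j _ => by ring
  have hsetEq : {ω | (∑ j, d ω j * z j).re ≤ 0} = {ω | φt ω ≤ -μφ} := by
    ext ω
    simp only [Set.mem_setOf_eq, hpoint ω]
    constructor <;> intro <;> linarith
  rw [hsetEq]
  -- Cantelli bound
  have hC : (P {ω | -μφ ≤ φt ω}).toReal ≤ σφsq / (σφsq + μφ^2) := by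
    have := cantelli hφ2 hφmean (show (∫ ω, (φt ω)^2 ∂P) = σφsq from hwvar) (t := -μφ) (by linarith)
    simpa [neg_sq] using this
  have hbound : σφsq / (σφsq + μφ^2) ≤ 1 - p := by
    have h1 : μφ^2 ≥ (p/(1-p)) * σφsq := by
      have h2 : -μφ ≥ Real.sqrt (p/(1-p)) * Real.sqrt σφsq := by linarith
      have h3 := Real.sq_sqrt ht0.le
      have h4 := Real.sq_sqrt hpos.le
      have h5 := mul_self_le_mul_self (mul_nonneg hst0.le hss.le) h2
      nlinarith
    rw [div_le_iff₀ (by positivity)]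
    have h5 : 0 < 1 - p := by linarith
    have h6 : p * σφsq ≤ (1-p) * μφ^2 := by
      have := mul_le_mul_of_nonneg_left h1 h5.le
      calc p * σφsq = (1-p) * ((p/(1-p)) * σφsq) := by field_simp
        _ ≤ (1-p) * μφ^2 := this
    nlinarith
  -- complement argument
  have hTm : NullMeasurableSet {ω | φt ω ≤ -μφ} P := by
    exact (hφ2.aestronglyMeasurable.aemeasurable.nullMeasurable) measurableSet_Iic
  have hsum : (P {ω | φt ω ≤ -μφ}).toReal + (P {ω | φt ω ≤ -μφ}ᶜ).toReal = 1 := by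
    rw [← ENNReal.toReal_add (measure_ne_top _ _) (measure_ne_top _ _),
      measure_add_measure_compl₀ hTm]
    simp
  have hcsub : {ω | φt ω ≤ -μφ}ᶜ ⊆ {ω | -μφ ≤ φt ω} := by
    intro ω hω
    simp only [Set.mem_compl_iff, Set.mem_setOf_eq, not_le] at hω
    exact le_of_lt hω
  have hcle : (P {ω | φt ω ≤ -μφ}ᶜ).toReal ≤ 1 - p :=
    le_trans (ENNReal.toReal_mono (measure_ne_top _ _) (measure_mono hcsub)) (hC.trans hbound)
  linarith

section Transfer
variable {α β : Type*} [MeasurableSpace α] [MeasurableSpace β]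
  {μ : Measure α} {ν : Measure β}
  {E : Type*} [NormedAddCommGroup E]

lemma memL2_fst [IsProbabilityMeasure μ] [IsProbabilityMeasure ν]
    {f : α → E} (hf : MemLp f 2 μ) :
    MemLp (fun x : α × β => f x.1) 2 (μ.prod ν) := by
  have h : (μ.prod ν).map Prod.fst = μ := Measure.fst_prod
  refine (memLp_map_measure_iff ?_ measurable_fst.aemeasurable).1 ?_
  · rw [h]; exact hf.1
  · rw [h]; exact hf

lemma memL2_snd [IsProbabilityMeasure μ] [IsProbabilityMeasure ν]
    {g : β → E} (hg : MemLp g 2 ν) :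
    MemLp (fun x : α × β => g x.2) 2 (μ.prod ν) := by
  have h : (μ.prod ν).map Prod.snd = ν := Measure.snd_prod
  refine (memLp_map_measure_iff ?_ measurable_snd.aemeasurable).1 ?_
  · rw [h]; exact hg.1
  · rw [h]; exact hg

end Transfer

section BoolMeasure

variable {q : ℝ}

noncomputable def boolM (q : ℝ) : Measure Bool :=
  (ENNReal.ofReal q) • Measure.dirac true + (ENNReal.ofReal (1-q)) • Measure.dirac false

lemma boolM_prob (hq0 : 0 ≤ q) (hq1 : q ≤ 1) : IsProbabilityMeasure (boolM q) := by
  constructor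
  simp only [boolM, Measure.add_apply, Measure.smul_apply, measure_univ, smul_eq_mul, mul_one]
  rw [← ENNReal.ofReal_add hq0 (by linarith)]
  norm_num

lemma boolM_integral {E : Type*} [NormedAddCommGroup E] [NormedSpace ℝ E] [CompleteSpace E]
    (hq0 : 0 ≤ q) (hq1 : q ≤ 1) (g : Bool → E) :
    ∫ b, g b ∂(boolM q) = q • g true + (1-q) • g false := by
  haveI h1 : IsFiniteMeasure ((ENNReal.ofReal q) • (Measure.dirac true : Measure Bool)) :=
    ⟨by simp [Measure.smul_apply, ENNReal.ofReal_lt_top]⟩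
  haveI h2 : IsFiniteMeasure ((ENNReal.ofReal (1-q)) • (Measure.dirac false : Measure Bool)) :=
    ⟨by simp [Measure.smul_apply, ENNReal.ofReal_lt_top]⟩
  rw [boolM, integral_add_measure (Integrable.of_finite) (Integrable.of_finite),
    integral_smul_measure, integral_smul_measure, integral_dirac, integral_dirac,
    ENNReal.toReal_ofReal hq0, ENNReal.toReal_ofReal (by linarith)]

lemma boolM_false (hq0 : 0 ≤ q) : boolM q {false} = ENNReal.ofReal (1-q) := by
  simp only [boolM, Measure.add_apply, Measure.smul_apply, smul_eq_mul]
  rw [Measure.dirac_apply' _ (by trivial), Measure.dirac_apply' _ (by trivial)]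
  simp

end BoolMeasure

lemma integral_cx {Ω : Type*} [MeasurableSpace Ω] {P : Measure Ω} (f : Ω → ℝ) :
    ∫ ω, ((f ω : ℝ) : ℂ) ∂P = ((∫ ω, f ω ∂P : ℝ) : ℂ) := integral_ofReal

lemma integral_four {Ω : Type*} [MeasurableSpace Ω] {P : Measure Ω}
    {f g h k : Ω → ℂ} (hf : Integrable f P) (hg : Integrable g P)
    (hh : Integrable h P) (hk : Integrable k P) :
    ∫ ω, (f ω - g ω - h ω + k ω) ∂P
      = (∫ ω, f ω ∂P) - (∫ ω, g ω ∂P) - (∫ ω, h ω ∂P) + (∫ ω, k ω ∂P) := by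
  have h1 : Integrable (fun ω => f ω - g ω) P := hf.sub hg
  have h2 : Integrable (fun ω => f ω - g ω - h ω) P := h1.sub hh
  rw [integral_add h2 hk, integral_sub h1 hh, integral_sub hf hg]

lemma integral_add4 {Ω : Type*} [MeasurableSpace Ω] {P : Measure Ω}
    {f g h k : Ω → ℂ} (hf : Integrable f P) (hg : Integrable g P)
    (hh : Integrable h P) (hk : Integrable k P) :
    ∫ ω, (f ω + g ω + h ω + k ω) ∂P
      = (∫ ω, f ω ∂P) + (∫ ω, g ω ∂P) + (∫ ω, h ω ∂P) + (∫ ω, k ω ∂P) := by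
  have h1 : Integrable (fun ω => f ω + g ω) P := hf.add hg
  have h2 : Integrable (fun ω => f ω + g ω + h ω) P := h1.add hh
  rw [integral_add h2 hk, integral_add h1 hh, integral_add hf hg]

def Xf (a b : ℝ) : Bool → ℝ := fun x => if x then a else b
@[simp] lemma Xf_true (a b : ℝ) : Xf a b true = a := rfl
@[simp] lemma Xf_false (a b : ℝ) : Xf a b false = b := rfl

set_option maxHeartbeats 1000000 in
lemma build {m : ℕ} (p : ℝ) (hp : p ∈ Set.Ioo (0:ℝ) 1)
    (μd : Fin m → ℂ) (Γ J : Matrix (Fin m) (Fin m) ℂ) (z : Fin m → ℂ)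
    (μφ : ℝ) (hμφ : μφ = (∑ j, μd j * z j).re)
    (σφsq : ℝ)
    (hσφ : σφsq = (1/2) * ((∑ j, ∑ k, z j * star (z k) * Γ j k).re
        + (∑ j, ∑ k, z j * z k * J j k).re))
    (hpos : 0 < σφsq)
    (hlt : 0 < Real.sqrt (p / (1 - p)) * Real.sqrt σφsq + μφ)
    (Ω : Type) [MeasurableSpace Ω] (P : Measure Ω) [IsProbabilityMeasure P]
    (d0 : Ω → Fin m → ℂ)
    (hL2 : ∀ j, MemLp (fun ω => d0 ω j) 2 P)
    (hmean : ∀ j, (∫ ω, d0 ω j ∂P) = μd j)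
    (hΓm : ∀ j k, (∫ ω, (d0 ω j - μd j) * star (d0 ω k - μd k) ∂P) = Γ j k)
    (hJm : ∀ j k, (∫ ω, (d0 ω j - μd j) * (d0 ω k - μd k) ∂P) = J j k) :
    ∃ (Ω' : Type) (_ : MeasurableSpace Ω') (P' : Measure Ω') (_ : IsProbabilityMeasure P')
      (d : Ω' → Fin m → ℂ),
      (∀ j, MemLp (fun ω => d ω j) 2 P') ∧
      (∀ j, (∫ ω, d ω j ∂P') = μd j) ∧
      (∀ j k, (∫ ω, (d ω j - μd j) * star (d ω k - μd k) ∂P') = Γ j k) ∧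
      (∀ j k, (∫ ω, (d ω j - μd j) * (d ω k - μd k) ∂P') = J j k) ∧
      (P' {ω | (∑ j, d ω j * z j).re ≤ 0}).toReal < p := by
  obtain ⟨hw2, hwmean, hwvar⟩ := momentA μd Γ J z σφsq hσφ d0 hL2 hmean hΓm hJm
  -- scalars
  have hp0 := hp.1
  have hp1 := hp.2
  have ht0 : 0 < p / (1 - p) := div_pos hp0 (by linarith)
  have hst0 : 0 < Real.sqrt (p / (1 - p)) := Real.sqrt_pos.2 ht0
  have hst2 : Real.sqrt (p / (1 - p)) ^ 2 = p / (1-p) := Real.sq_sqrt ht0.le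
  set σ : ℝ := Real.sqrt σφsq with hσdef
  have hσpos : 0 < σ := Real.sqrt_pos.2 hpos
  have hσ2 : σ^2 = σφsq := Real.sq_sqrt hpos.le
  set r : ℝ := -μφ / σ with hrdef
  have hμφr : σ * r = -μφ := by
    rw [hrdef]; field_simp
  have hrlt : r < Real.sqrt (p / (1 - p)) := by nlinarith
  set s : ℝ := (max r 0 + Real.sqrt (p / (1 - p)))/2 with hsdef
  have hmax : max r 0 < Real.sqrt (p / (1 - p)) := max_lt hrlt hst0
  have hs0 : 0 < s := by
    have := le_max_right r 0
    rw [hsdef]; linarith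
  have hsr : r < s := by
    have := le_max_left r 0
    rw [hsdef]; linarith
  have hslt : s < Real.sqrt (p / (1 - p)) := by rw [hsdef]; linarith
  have hs2 : s^2 < p/(1-p) := by nlinarith
  set q : ℝ := 1/(1+s^2) with hqdef
  have hq0 : 0 < q := by rw [hqdef]; positivity
  have hq1 : q < 1 := by
    rw [hqdef, div_lt_one (by nlinarith)]; nlinarith
  have h1qp : 1 - q < p := by
    rw [lt_div_iff₀ (by linarith)] at hs2
    have hd : (0:ℝ) < 1 + s^2 := by positivity
    rw [hqdef]
    have he : 1 - 1/(1+s^2) = s^2/(1+s^2) := by field_simp; ring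
    rw [he, div_lt_iff₀ hd]; nlinarith
  -- the Bool-side random variable
  have hsne : s ≠ 0 := ne_of_gt hs0
  have hσne : σ ≠ 0 := ne_of_gt hσpos
  have h1s : (1:ℝ) + s^2 ≠ 0 := by positivity
  set X : Bool → ℝ := Xf (σ * s) (-(σ / s)) with hXdef
  haveI hρprob : IsProbabilityMeasure (boolM q) := boolM_prob hq0.le hq1.le
  have hXmeanR : (∫ b, X b ∂(boolM q)) = 0 := by
    rw [boolM_integral hq0.le hq1.le]
    simp only [hXdef, Xf_true, Xf_false, smul_eq_mul, hqdef]
    field_simp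
    ring
  have hXvarR : (∫ b, (X b)^2 ∂(boolM q)) = σφsq := by
    rw [boolM_integral hq0.le hq1.le]
    simp only [hXdef, Xf_true, Xf_false, smul_eq_mul, hqdef]
    rw [← hσ2]
    field_simp
    ring
  have hXmean : (∫ b, ((X b : ℝ) : ℂ) ∂(boolM q)) = 0 := by
    rw [integral_cx, hXmeanR]; simp
  have hXvar : (∫ b, (((X b : ℝ) : ℂ) * ((X b : ℝ) : ℂ)) ∂(boolM q)) = (σφsq : ℂ) := by
    have hc : ∀ b, ((X b : ℝ) : ℂ) * ((X b : ℝ) : ℂ) = (((X b)^2 : ℝ) : ℂ) := by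
      intro b; push_cast; ring
    simp_rw [hc]
    rw [integral_cx, hXvarR]
  -- the Ω-side decomposition
  set φt : Ω → ℝ := fun ω => (∑ j, (d0 ω j - μd j) * z j).re with hφtdef
  set φC : Ω → ℂ := fun ω => ((φt ω : ℝ) : ℂ) with hφCdef
  set c : Fin m → ℂ := fun j => (∫ ω, (d0 ω j - μd j) * φC ω ∂P) / (σφsq : ℂ) with hcdef
  set R : Ω → Fin m → ℂ := fun ω j => (d0 ω j - μd j) - c j * φC ω with hRdef
  have hY2 : ∀ j, MemLp (fun ω => d0 ω j - μd j) 2 P :=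
    fun j => (hL2 j).sub (memLp_const _)
  have hYint : ∀ j, (∫ ω, (d0 ω j - μd j) ∂P) = 0 := by
    intro j
    rw [integral_sub ((hL2 j).integrable one_le_two) (integrable_const _)]
    simp [hmean j]
  have hφ2 : MemLp φt 2 P := by
    have := hw2.re
    simpa [RCLike.re_to_complex, hφtdef] using this
  have hφC2 : MemLp φC 2 P := by
    have : LipschitzWith 1 (fun x : ℝ => (x : ℂ)) := Complex.isometry_ofReal.lipschitz
    exact this.comp_memLp (by simp) hφ2
  have hφmean : (∫ ω, φt ω ∂P) = 0 := by
    rw [hφtdef]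
    simp_rw [← RCLike.re_to_complex]
    rw [integral_re (hw2.integrable one_le_two), hwmean]
    simp
  have hφCmean : (∫ ω, φC ω ∂P) = 0 := by
    rw [hφCdef]
    rw [integral_cx, hφmean]
    simp
  have hφφ : (∫ ω, φC ω * φC ω ∂P) = (σφsq : ℂ) := by
    have hc2 : ∀ ω, φC ω * φC ω = ((φt ω^2 : ℝ) : ℂ) := by
      intro ω; rw [hφCdef]; push_cast; ring
    simp_rw [hc2]
    rw [integral_cx]
    norm_cast
  have hσC : (σφsq : ℂ) ≠ 0 := Complex.ofReal_ne_zero.2 (ne_of_gt hpos)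
  have hcσ : ∀ j, (∫ ω, (d0 ω j - μd j) * φC ω ∂P) = c j * σφsq := by
    intro j; rw [hcdef]; field_simp
  have hR2 : ∀ j, MemLp (fun ω => R ω j) 2 P := by
    intro j
    have := (hY2 j).sub (hφC2.const_mul (c j))
    exact this
  have hRint : ∀ j, Integrable (fun ω => R ω j) P := fun j => (hR2 j).integrable one_le_two
  have hRmean : ∀ j, (∫ ω, R ω j ∂P) = 0 := by
    intro j
    rw [hRdef]
    rw [integral_sub ((hY2 j).integrable one_le_two) ((hφC2.integrable one_le_two).const_mul _)]
    rw [integral_const_mul, hYint j, hφCmean]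
    simp
  have hRφ : ∀ j, (∫ ω, R ω j * φC ω ∂P) = 0 := by
    intro j
    have hfun : (fun ω => R ω j * φC ω) =
        fun ω => (d0 ω j - μd j) * φC ω - c j * (φC ω * φC ω) := by
      funext ω; rw [hRdef]; ring
    rw [hfun, integral_sub (int_mul_L2 (hY2 j) hφC2) ((int_mul_L2 hφC2 hφC2).const_mul _),
      integral_const_mul, hcσ j, hφφ]
    ring
  have hYstarφ : ∀ k, (∫ ω, star (d0 ω k - μd k) * φC ω ∂P) = star (c k) * σφsq := by
    intro k
    have hfun : (fun ω => star (d0 ω k - μd k) * φC ω) =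
        fun ω => (starRingEnd ℂ) ((d0 ω k - μd k) * φC ω) := by
      funext ω
      rw [map_mul, hφCdef]
      simp [Complex.conj_ofReal]
    rw [hfun, integral_conj, hcσ k, map_mul]
    simp [Complex.conj_ofReal]
  have hRstarφ : ∀ k, (∫ ω, star (R ω k) * φC ω ∂P) = 0 := by
    intro k
    have hfun : (fun ω => star (R ω k) * φC ω) =
        fun ω => (starRingEnd ℂ) (R ω k * φC ω) := by
      funext ω
      rw [map_mul, hφCdef]
      simp [Complex.conj_ofReal]
    rw [hfun, integral_conj, hRφ k]
    simp
  -- the direction α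
  set α : ℂ := ∑ j, c j * z j with hαdef
  have hαuseful : α * (σφsq : ℂ) = ∫ ω, (∑ j, (d0 ω j - μd j) * z j) * φC ω ∂P := by
    have hfun : ∀ ω, (∑ j, (d0 ω j - μd j) * z j) * φC ω
        = ∑ j, z j * ((d0 ω j - μd j) * φC ω) := by
      intro ω
      rw [Finset.sum_mul]
      exact Finset.sum_congr rfl fun j _ => by ring
    simp_rw [hfun]
    rw [integral_finset_sum _ (fun j _ => (int_mul_L2 (hY2 j) hφC2).const_mul _)]
    have : ∀ j ∈ Finset.univ, z j * (∫ ω, (d0 ω j - μd j) * φC ω ∂P)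
        = (c j * z j) * (σφsq : ℂ) := by
      intro j _
      rw [hcσ j]; ring
    rw [hαdef, Finset.sum_mul]
    refine (Finset.sum_congr rfl fun j _ => ?_).symm
    rw [integral_const_mul, hcσ j]; ring
  have hαre : α.re = 1 := by
    have h1 : (α * (σφsq : ℂ)).re = σφsq := by
      rw [hαuseful]
      rw [show (∫ ω, (∑ j, (d0 ω j - μd j) * z j) * φC ω ∂P).re
          = ∫ ω, ((∑ j, (d0 ω j - μd j) * z j) * φC ω).re ∂P by
        simp_rw [← RCLike.re_to_complex]
        rw [integral_re (int_mul_L2 hw2 hφC2)]]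
      have h3 : ∀ ω, ((∑ j, (d0 ω j - μd j) * z j) * φC ω).re = (φt ω)^2 := by
        intro ω
        rw [hφCdef]
        simp only [Complex.mul_re, Complex.ofReal_re, Complex.ofReal_im, mul_zero, sub_zero]
        rw [hφtdef]; ring
      simp_rw [h3]
      exact hwvar
    have h2 : (α * (σφsq : ℂ)).re = α.re * σφsq := by
      simp [Complex.mul_re]
    rw [h2] at h1
    exact mul_right_cancel₀ (ne_of_gt hpos) (by rw [h1, one_mul])
  -- the new random vector on the product space
  set dn : Ω × Bool → Fin m → ℂ := fun x j => μd j + R x.1 j + c j * ((X x.2 : ℝ) : ℂ) with hdndef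
  have hXC2 : MemLp (fun b => ((X b : ℝ) : ℂ)) 2 (boolM q) := MemLp.of_discrete
  -- key moment identities on Ω
  have hRR : ∀ j k, (∫ ω, R ω j * star (R ω k) ∂P) = Γ j k - c j * star (c k) * σφsq := by
    intro j k
    have hfun : (fun ω => R ω j * star (R ω k)) = fun ω =>
        (d0 ω j - μd j) * star (d0 ω k - μd k)
        - star (c k) * ((d0 ω j - μd j) * φC ω)
        - c j * (star (d0 ω k - μd k) * φC ω)
        + (c j * star (c k)) * (φC ω * φC ω) := by
      funext ω
      rw [hRdef]
      simp only [star_sub, star_mul', hφCdef, Complex.star_def, Complex.conj_ofReal]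
      ring
    have i1 : Integrable (fun ω => (d0 ω j - μd j) * star (d0 ω k - μd k)) P := by
      have := int_mul_L2 (hY2 j) (memL2_conj (hY2 k))
      simpa [Complex.star_def] using this
    have i2 : Integrable (fun ω => star (c k) * ((d0 ω j - μd j) * φC ω)) P :=
      (int_mul_L2 (hY2 j) hφC2).const_mul _
    have i3 : Integrable (fun ω => c j * (star (d0 ω k - μd k) * φC ω)) P := by
      have := (int_mul_L2 (memL2_conj (hY2 k)) hφC2).const_mul (c j)
      simpa [Complex.star_def] using this
    have i4 : Integrable (fun ω => (c j * star (c k)) * (φC ω * φC ω)) P :=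
      (int_mul_L2 hφC2 hφC2).const_mul _
    rw [hfun, integral_four i1 i2 i3 i4, integral_const_mul, integral_const_mul,
      integral_const_mul, hΓm j k, hcσ j, hYstarφ k, hφφ]
    ring
  have hRRp : ∀ j k, (∫ ω, R ω j * R ω k ∂P) = J j k - c j * c k * σφsq := by
    intro j k
    have hfun : (fun ω => R ω j * R ω k) = fun ω =>
        (d0 ω j - μd j) * (d0 ω k - μd k)
        - c k * ((d0 ω j - μd j) * φC ω)
        - c j * ((d0 ω k - μd k) * φC ω)
        + (c j * c k) * (φC ω * φC ω) := by
      funext ω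
      rw [hRdef]
      ring
    have i1 : Integrable (fun ω => (d0 ω j - μd j) * (d0 ω k - μd k)) P :=
      int_mul_L2 (hY2 j) (hY2 k)
    have i2 : Integrable (fun ω => c k * ((d0 ω j - μd j) * φC ω)) P :=
      (int_mul_L2 (hY2 j) hφC2).const_mul _
    have i3 : Integrable (fun ω => c j * ((d0 ω k - μd k) * φC ω)) P :=
      (int_mul_L2 (hY2 k) hφC2).const_mul _
    have i4 : Integrable (fun ω => (c j * c k) * (φC ω * φC ω)) P :=
      (int_mul_L2 hφC2 hφC2).const_mul _
    rw [hfun, integral_four i1 i2 i3 i4, integral_const_mul, integral_const_mul,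
      integral_const_mul, hJm j k, hcσ j, hcσ k, hφφ]
    ring
  refine ⟨Ω × Bool, inferInstance, P.prod (boolM q), inferInstance, dn, ?_, ?_, ?_, ?_, ?_⟩
  · -- MemLp
    intro j
    have h1 : MemLp (fun x : Ω × Bool => R x.1 j) 2 (P.prod (boolM q)) := memL2_fst (hR2 j)
    have h2 : MemLp (fun x : Ω × Bool => c j * ((X x.2 : ℝ) : ℂ)) 2 (P.prod (boolM q)) :=
      memL2_snd (hXC2.const_mul _)
    have := ((memLp_const (μd j)).add h1).add h2
    exact this
  · -- mean
    intro j
    have hfun : (fun x : Ω × Bool => dn x j) = fun x =>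
        (fun ω => μd j + R ω j) x.1 * (fun _ : Bool => (1:ℂ)) x.2
        + (fun _ : Ω => (1:ℂ)) x.1 * (fun b => c j * ((X b : ℝ) : ℂ)) x.2 := by
      funext x; simp only [hdndef]; ring
    have ia : Integrable (fun ω => μd j + R ω j) P := (integrable_const _).add (hRint j)
    have iA : Integrable (fun x : Ω × Bool =>
        (fun ω => μd j + R ω j) x.1 * (fun _ : Bool => (1:ℂ)) x.2) (P.prod (boolM q)) :=
      ia.mul_prod (integrable_const _)
    have iB : Integrable (fun x : Ω × Bool =>
        (fun _ : Ω => (1:ℂ)) x.1 * (fun b => c j * ((X b : ℝ) : ℂ)) x.2) (P.prod (boolM q)) :=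
      (integrable_const _).mul_prod
        (Integrable.of_finite : Integrable (fun b => c j * ((X b : ℝ) : ℂ)) (boolM q))
    rw [hfun, integral_add iA iB,
      integral_prod_mul (f := fun ω => μd j + R ω j) (g := fun _ : Bool => (1:ℂ)),
      integral_prod_mul (f := fun _ : Ω => (1:ℂ)) (g := fun b => c j * ((X b : ℝ) : ℂ)),
      integral_add (integrable_const _) (hRint j), integral_const, hRmean j,
      integral_const, integral_const_mul, hXmean]
    simp only [measure_univ, probReal_univ, ENNReal.toReal_one, one_smul, smul_eq_mul, mul_one, one_mul,
      add_zero, mul_zero]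
  · -- covariance
    intro j k
    have hfun : (fun x : Ω × Bool => (dn x j - μd j) * star (dn x k - μd k)) = fun x =>
        (fun ω => R ω j * star (R ω k)) x.1 * (fun _ : Bool => (1:ℂ)) x.2
        + (fun ω => R ω j) x.1 * (fun b => star (c k) * ((X b : ℝ) : ℂ)) x.2
        + (fun ω => star (R ω k)) x.1 * (fun b => c j * ((X b : ℝ) : ℂ)) x.2
        + (fun _ : Ω => (1:ℂ)) x.1 * (fun b => (c j * star (c k)) * (((X b : ℝ) : ℂ) * ((X b : ℝ) : ℂ))) x.2 := by
      funext x
      have hd1 : dn x j - μd j = R x.1 j + c j * ((X x.2 : ℝ) : ℂ) := by rw [hdndef]; ring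
      have hd2 : dn x k - μd k = R x.1 k + c k * ((X x.2 : ℝ) : ℂ) := by rw [hdndef]; ring
      rw [hd1, hd2]
      simp only [star_add, star_mul', Complex.star_def, Complex.conj_ofReal]
      ring
    have iR1 : Integrable (fun ω => R ω j * star (R ω k)) P := by
      have := int_mul_L2 (hR2 j) (memL2_conj (hR2 k))
      simpa [Complex.star_def] using this
    have iRs : Integrable (fun ω => star (R ω k)) P := by
      have := ((memL2_conj (hR2 k)).integrable one_le_two)
      simpa [Complex.star_def] using this
    have i1 : Integrable (fun x : Ω × Bool => (fun ω => R ω j * star (R ω k)) x.1 * (fun _ : Bool => (1:ℂ)) x.2) (P.prod (boolM q)) :=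
      iR1.mul_prod (integrable_const _)
    have i2 : Integrable (fun x : Ω × Bool => (fun ω => R ω j) x.1 * (fun b => star (c k) * ((X b : ℝ) : ℂ)) x.2) (P.prod (boolM q)) :=
      (hRint j).mul_prod
        (Integrable.of_finite : Integrable (fun b => star (c k) * ((X b : ℝ) : ℂ)) (boolM q))
    have i3 : Integrable (fun x : Ω × Bool => (fun ω => star (R ω k)) x.1 * (fun b => c j * ((X b : ℝ) : ℂ)) x.2) (P.prod (boolM q)) :=
      iRs.mul_prod
        (Integrable.of_finite : Integrable (fun b => c j * ((X b : ℝ) : ℂ)) (boolM q))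
    have i4 : Integrable (fun x : Ω × Bool => (fun _ : Ω => (1:ℂ)) x.1 * (fun b => (c j * star (c k)) * (((X b : ℝ) : ℂ) * ((X b : ℝ) : ℂ))) x.2) (P.prod (boolM q)) :=
      (integrable_const _).mul_prod
        (Integrable.of_finite : Integrable (fun b => (c j * star (c k)) * (((X b : ℝ) : ℂ) * ((X b : ℝ) : ℂ))) (boolM q))
    rw [hfun, integral_add4 i1 i2 i3 i4,
      integral_prod_mul (f := fun ω => R ω j * star (R ω k)) (g := fun _ : Bool => (1:ℂ)),
      integral_prod_mul (f := fun ω => R ω j) (g := fun b => star (c k) * ((X b : ℝ) : ℂ)),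
      integral_prod_mul (f := fun ω => star (R ω k)) (g := fun b => c j * ((X b : ℝ) : ℂ)),
      integral_prod_mul (f := fun _ : Ω => (1:ℂ))
        (g := fun b => (c j * star (c k)) * (((X b : ℝ) : ℂ) * ((X b : ℝ) : ℂ))),
      integral_const_mul, integral_const_mul, integral_const_mul,
      hXmean, hXvar, hRR j k, integral_const]
    simp only [measure_univ, probReal_univ, ENNReal.toReal_one, one_smul, smul_eq_mul, mul_one, one_mul,
      mul_zero, add_zero]
    rw [integral_const (μ := P) (1:ℂ)]
    simp only [measure_univ, probReal_univ, ENNReal.toReal_one, one_smul]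
    ring
  · -- pseudo-covariance
    intro j k
    have hfun : (fun x : Ω × Bool => (dn x j - μd j) * (dn x k - μd k)) = fun x =>
        (fun ω => R ω j * R ω k) x.1 * (fun _ : Bool => (1:ℂ)) x.2
        + (fun ω => R ω j) x.1 * (fun b => c k * ((X b : ℝ) : ℂ)) x.2
        + (fun ω => R ω k) x.1 * (fun b => c j * ((X b : ℝ) : ℂ)) x.2
        + (fun _ : Ω => (1:ℂ)) x.1 * (fun b => (c j * c k) * (((X b : ℝ) : ℂ) * ((X b : ℝ) : ℂ))) x.2 := by
      funext x
      have hd1 : dn x j - μd j = R x.1 j + c j * ((X x.2 : ℝ) : ℂ) := by rw [hdndef]; ring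
      have hd2 : dn x k - μd k = R x.1 k + c k * ((X x.2 : ℝ) : ℂ) := by rw [hdndef]; ring
      rw [hd1, hd2]
      ring
    have iR1 : Integrable (fun ω => R ω j * R ω k) P := int_mul_L2 (hR2 j) (hR2 k)
    have i1 : Integrable (fun x : Ω × Bool => (fun ω => R ω j * R ω k) x.1 * (fun _ : Bool => (1:ℂ)) x.2) (P.prod (boolM q)) :=
      iR1.mul_prod (integrable_const _)
    have i2 : Integrable (fun x : Ω × Bool => (fun ω => R ω j) x.1 * (fun b => c k * ((X b : ℝ) : ℂ)) x.2) (P.prod (boolM q)) :=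
      (hRint j).mul_prod
        (Integrable.of_finite : Integrable (fun b => c k * ((X b : ℝ) : ℂ)) (boolM q))
    have i3 : Integrable (fun x : Ω × Bool => (fun ω => R ω k) x.1 * (fun b => c j * ((X b : ℝ) : ℂ)) x.2) (P.prod (boolM q)) :=
      (hRint k).mul_prod
        (Integrable.of_finite : Integrable (fun b => c j * ((X b : ℝ) : ℂ)) (boolM q))
    have i4 : Integrable (fun x : Ω × Bool => (fun _ : Ω => (1:ℂ)) x.1 * (fun b => (c j * c k) * (((X b : ℝ) : ℂ) * ((X b : ℝ) : ℂ))) x.2) (P.prod (boolM q)) :=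
      (integrable_const _).mul_prod
        (Integrable.of_finite : Integrable (fun b => (c j * c k) * (((X b : ℝ) : ℂ) * ((X b : ℝ) : ℂ))) (boolM q))
    rw [hfun, integral_add4 i1 i2 i3 i4,
      integral_prod_mul (f := fun ω => R ω j * R ω k) (g := fun _ : Bool => (1:ℂ)),
      integral_prod_mul (f := fun ω => R ω j) (g := fun b => c k * ((X b : ℝ) : ℂ)),
      integral_prod_mul (f := fun ω => R ω k) (g := fun b => c j * ((X b : ℝ) : ℂ)),
      integral_prod_mul (f := fun _ : Ω => (1:ℂ))
        (g := fun b => (c j * c k) * (((X b : ℝ) : ℂ) * ((X b : ℝ) : ℂ))),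
      integral_const_mul, integral_const_mul, integral_const_mul,
      hXmean, hXvar, hRRp j k, integral_const]
    simp only [measure_univ, probReal_univ, ENNReal.toReal_one, one_smul, smul_eq_mul, mul_one, one_mul,
      mul_zero, add_zero]
    rw [integral_const (μ := P) (1:ℂ)]
    simp only [measure_univ, probReal_univ, ENNReal.toReal_one, one_smul]
    ring
  · -- the probability bound
    have e2 : ∀ ω, (∑ j, R ω j * z j) = (∑ j, (d0 ω j - μd j) * z j) - α * φC ω := by
      intro ω
      rw [hαdef, Finset.sum_mul, ← Finset.sum_sub_distrib]
      exact Finset.sum_congr rfl fun j _ => by rw [hRdef]; ring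
    have hkey : ∀ x : Ω × Bool, (∑ j, dn x j * z j).re = μφ + X x.2 := by
      intro x
      have e1 : (∑ j, dn x j * z j) = (∑ j, μd j * z j)
          + ((∑ j, (d0 x.1 j - μd j) * z j) - α * φC x.1) + α * ((X x.2 : ℝ) : ℂ) := by
        have e0 : (∑ j, dn x j * z j)
            = ∑ j, (μd j * z j + R x.1 j * z j + (c j * z j) * ((X x.2 : ℝ) : ℂ)) :=
          Finset.sum_congr rfl fun j _ => by rw [hdndef]; ring
        rw [e0, Finset.sum_add_distrib, Finset.sum_add_distrib, e2 x.1, ← Finset.sum_mul, ← hαdef]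
      rw [e1]
      simp only [Complex.add_re, Complex.sub_re, Complex.mul_re, Complex.ofReal_re,
        Complex.ofReal_im, hαre, hφCdef, mul_zero, sub_zero, one_mul, ← hμφ]
      rw [hφtdef]
      ring
    have hset : {x : Ω × Bool | (∑ j, dn x j * z j).re ≤ 0}
        = Set.univ ×ˢ {b | μφ + X b ≤ 0} := by
      ext x
      simp only [Set.mem_setOf_eq, Set.mem_prod, Set.mem_univ, true_and]
      rw [hkey x]
    rw [hset, Measure.prod_prod, measure_univ, one_mul]
    have hSsub : {b | μφ + X b ≤ 0} ⊆ {false} := by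
      intro b hb
      cases b
      · simp
      · exfalso
        simp only [Set.mem_setOf_eq, hXdef, Xf_true] at hb
        nlinarith [mul_pos hσpos (sub_pos.2 hsr)]
    calc (boolM q {b | μφ + X b ≤ 0}).toReal
        ≤ (boolM q {false}).toReal :=
          ENNReal.toReal_mono (measure_ne_top _ _) (measure_mono hSsub)
      _ = 1 - q := by rw [boolM_false hq0.le, ENNReal.toReal_ofReal (by linarith)]
      _ < p := h1qp

/-- Distributionally robust complex chance constraint with known mean, covariance
and pseudo-covariance: the worst case over all complex random vectors with the
prescribed moments satisfies the chance constraint at level `p` iff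
`√(p/(1−p))·σ_φ + μ_φ ≤ 0`. -/
theorem stmt_7 (m : ℕ) (p : ℝ) (hp : p ∈ Set.Ioo (0:ℝ) 1)
    (μd : Fin m → ℂ) (Γ J : Matrix (Fin m) (Fin m) ℂ)
    (hΓ : Γ.IsHermitian) (hJ : J.IsSymm)
    (hex : ∃ (Ω : Type) (_ : MeasurableSpace Ω) (P : Measure Ω)
        (_ : IsProbabilityMeasure P) (d : Ω → Fin m → ℂ),
        (∀ j, MemLp (fun ω => d ω j) 2 P) ∧
        (∀ j, (∫ ω, d ω j ∂P) = μd j) ∧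
        (∀ j k, (∫ ω, (d ω j - μd j) * star (d ω k - μd k) ∂P) = Γ j k) ∧
        (∀ j k, (∫ ω, (d ω j - μd j) * (d ω k - μd k) ∂P) = J j k))
    (z : Fin m → ℂ)
    (μφ : ℝ) (hμφ : μφ = (∑ j, μd j * z j).re)
    (σφsq : ℝ)
    (hσφ : σφsq = (1/2) * ((∑ j, ∑ k, z j * star (z k) * Γ j k).re
        + (∑ j, ∑ k, z j * z k * J j k).re))
    (hpos : 0 < σφsq) :
    (∀ (Ω : Type) (_ : MeasurableSpace Ω) (P : Measure Ω), IsProbabilityMeasure P →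
      ∀ d : Ω → Fin m → ℂ,
        (∀ j, MemLp (fun ω => d ω j) 2 P) →
        (∀ j, (∫ ω, d ω j ∂P) = μd j) →
        (∀ j k, (∫ ω, (d ω j - μd j) * star (d ω k - μd k) ∂P) = Γ j k) →
        (∀ j k, (∫ ω, (d ω j - μd j) * (d ω k - μd k) ∂P) = J j k) →
        p ≤ (P {ω | (∑ j, d ω j * z j).re ≤ 0}).toReal)
    ↔ Real.sqrt (p / (1 - p)) * Real.sqrt σφsq + μφ ≤ 0 := by
  constructor
  · intro hcon
    by_contra hnot
    push_neg at hnot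
    obtain ⟨Ω₀, m₀, P₀, hP₀, d0, hL2, hmean, hΓ0, hJ0⟩ := hex
    haveI := hP₀
    obtain ⟨Ω', mΩ', P', hP', d, h1, h2, h3, h4, h5⟩ :=
      build p hp μd Γ J z μφ hμφ σφsq hσφ hpos hnot Ω₀ P₀ d0 hL2 hmean hΓ0 hJ0
    haveI := hP'
    exact absurd (hcon Ω' mΩ' P' hP' d h1 h2 h3 h4) (not_le.2 h5)
  · intro hineq Ω mΩ P hP d hL2' hmean' hΓ' hJ'
    haveI := hP
    exact backward p hp μd Γ J z μφ hμφ σφsq hσφ hpos hineq d hL2' hmean' hΓ' hJ'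
end

section
/- Let ν be a probability measure on ℝ with mean μ, variance σ² with σ > 0, and symmetric about its mean, i.e., the pushforward of ν under the map x ↦ 2μ − x equals ν. Let p ∈ [1/2, 1). If σ/√(2(1−p)) + μ ≤ 0, then ν((−∞, 0]) ≥ p. -/
open MeasureTheory

/-- Distributionally robust chance constraint over symmetric distributions with
prescribed mean `m` and variance `σ²`: for `p ∈ [1/2, 1)`, if
`σ/√(2(1−p)) + m ≤ 0` then `ν((−∞,0]) ≥ p`. -/
theorem stmt_8 (ν : Measure ℝ) [IsProbabilityMeasure ν]
    (m σ : ℝ) (hσ : 0 < σ) (hmem : MemLp id 2 ν)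
    (hmean : (∫ x, x ∂ν) = m) (hvar : (∫ x, (x - m) ^ 2 ∂ν) = σ ^ 2)
    (hsymm : ν.map (fun x => 2 * m - x) = ν)
    (p : ℝ) (hp : p ∈ Set.Ico (1/2 : ℝ) 1)
    (h : σ / Real.sqrt (2 * (1 - p)) + m ≤ 0) :
    p ≤ (ν (Set.Iic 0)).toReal := by
  obtain ⟨hp2, hp1⟩ := hp
  set s := Real.sqrt (2 * (1 - p)) with hs
  have hs2 : s ^ 2 = 2 * (1 - p) := Real.sq_sqrt (by linarith)
  have hsp : 0 < s := Real.sqrt_pos.mpr (by linarith)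
  have hm : m < 0 := by
    have : 0 < σ / s := div_pos hσ hsp
    linarith
  have hσm : σ ≤ -m * s := by
    have : σ / s ≤ -m := by linarith
    calc σ = σ / s * s := by field_simp
    _ ≤ -m * s := by nlinarith
  -- key real inequality
  have hkey : σ ^ 2 / (-m) ^ 2 ≤ 2 * (1 - p) := by
    rw [div_le_iff₀ (pow_pos (by linarith : (0:ℝ) < -m) 2)]
    nlinarith
  -- variance of id
  have hvar' : ProbabilityTheory.variance id ν = σ ^ 2 := by
    rw [ProbabilityTheory.variance_eq_integral hmem.aestronglyMeasurable.aemeasurable]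
    simp only [Pi.pow_apply, Pi.sub_apply, id_eq]
    rw [hmean]
    exact hvar
  have hmean' : (∫ x, id x ∂ν) = m := hmean
  have cheb := ProbabilityTheory.meas_ge_le_variance_div_sq hmem (c := -m) (by linarith)
  rw [hvar', hmean'] at cheb
  simp only [id_eq] at cheb
  -- symmetry: ν (Ici 0) = ν (Iic (2m))
  have hrefl : ν (Set.Ici (0:ℝ)) = ν (Set.Iic (2*m)) := by
    conv_lhs => rw [← hsymm]
    rw [Measure.map_apply (by fun_prop : Measurable fun x : ℝ => 2 * m - x) measurableSet_Ici]
    congr 1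
    ext x
    simp only [Set.mem_preimage, Set.mem_Ici, Set.mem_Iic, sub_nonneg]
  -- the union is contained in the Chebyshev set
  have hsub : Set.Ici (0:ℝ) ∪ Set.Iic (2*m) ⊆ {x : ℝ | -m ≤ |x - m|} := by
    rintro x (hx | hx) <;>
      simp only [Set.mem_Ici, Set.mem_Iic] at hx <;> simp only [Set.mem_setOf_eq]
    · exact le_abs.mpr (Or.inl (by linarith))
    · exact le_abs.mpr (Or.inr (by linarith))
  have hdisj : Disjoint (Set.Ici (0:ℝ)) (Set.Iic (2*m)) := by
    rw [Set.disjoint_left]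
    intro x hx hx'
    simp only [Set.mem_Ici] at hx
    simp only [Set.mem_Iic] at hx'
    linarith
  have hunion : ν (Set.Ici (0:ℝ)) + ν (Set.Iic (2*m)) = ν (Set.Ici (0:ℝ) ∪ Set.Iic (2*m)) :=
    (measure_union hdisj measurableSet_Iic).symm
  have h2 : ν (Set.Ici (0:ℝ)) + ν (Set.Ici (0:ℝ)) ≤
      ENNReal.ofReal (1 - p) + ENNReal.ofReal (1 - p) := by
    calc ν (Set.Ici (0:ℝ)) + ν (Set.Ici (0:ℝ))
        = ν (Set.Ici (0:ℝ)) + ν (Set.Iic (2*m)) := by rw [← hrefl]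
      _ = ν (Set.Ici (0:ℝ) ∪ Set.Iic (2*m)) := hunion
      _ ≤ ν {x : ℝ | -m ≤ |x - m|} := measure_mono hsub
      _ ≤ ENNReal.ofReal (σ ^ 2 / (-m) ^ 2) := cheb
      _ ≤ ENNReal.ofReal (2 * (1 - p)) := ENNReal.ofReal_le_ofReal hkey
      _ = ENNReal.ofReal (1 - p) + ENNReal.ofReal (1 - p) := by
          rw [← ENNReal.ofReal_add (by linarith) (by linarith)]; ring_nf
  have hIci : ν (Set.Ici (0:ℝ)) ≤ ENNReal.ofReal (1 - p) := by
    have := h2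
    rw [← two_mul, ← two_mul] at this
    exact (ENNReal.mul_le_mul_iff_right (by norm_num) (by norm_num)).mp this
  have hIoi : (ν (Set.Ioi (0:ℝ))).toReal ≤ 1 - p := by
    have hle : ν (Set.Ioi (0:ℝ)) ≤ ENNReal.ofReal (1 - p) :=
      le_trans (measure_mono Set.Ioi_subset_Ici_self) hIci
    exact ENNReal.toReal_le_of_le_ofReal (by linarith) hle
  have hsplit : (ν (Set.Iic (0:ℝ))).toReal + (ν (Set.Ioi (0:ℝ))).toReal = 1 := by
    have : ν (Set.Iic (0:ℝ)) + ν (Set.Ioi (0:ℝ)) = 1 := by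
      rw [← measure_union (Set.Iic_disjoint_Ioi le_rfl) measurableSet_Ioi,
        Set.Iic_union_Ioi, measure_univ]
    have h1 := congrArg ENNReal.toReal this
    rwa [ENNReal.toReal_add (measure_ne_top ν _) (measure_ne_top ν _), ENNReal.toReal_one] at h1
  linarith
end

section
/- Let d be a random vector taking values in ℂ^m with E‖d‖² < ∞ and mean μ_d, and suppose the covariance matrix Σ ∈ ℝ^{2m×2m} of the stacked real random vector [Re d; Im d] satisfies Σ ⪯ L in the Loewner order for a given symmetric matrix L ∈ ℝ^{2m×2m}. Let p ∈ (0,1), let z̃ ∈ ℂ^m, and set w = [Re z̃; −Im z̃] ∈ ℝ^{2m}. If Re(Σ_j μ_{d,j} z̃_j) + √(p/(1−p)) · √(w^T L w) ≤ 0, then P[Re(Σ_j d_j z̃_j) ≤ 0] ≥ p. -/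
open MeasureTheory ProbabilityTheory Finset

lemma aux_int_mul {Ω : Type*} [MeasurableSpace Ω] (P : Measure Ω) [IsProbabilityMeasure P]
    {f g : Ω → ℝ} (hf : MemLp f 2 P) (hg : MemLp g 2 P) :
    Integrable (fun ω => f ω * g ω) P := by
  rw [← memLp_one_iff_integrable]
  have h : (1:ENNReal)/1 = 1/2 + 1/2 := by rw [ENNReal.div_add_div_same, one_div_one]; exact (ENNReal.div_self (two_ne_zero) (ENNReal.ofNat_ne_top)).symm.trans (by norm_num)
  have h2 := MemLp.smul (r := 1) hf hg
  have : (g • f) = fun ω => f ω * g ω := by funext ω; simp [mul_comm]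
  rwa [this] at h2

lemma aux_re_memlp {Ω : Type*} [MeasurableSpace Ω] (P : Measure Ω)
    {f : Ω → ℂ} (hf : MemLp f 2 P) : MemLp (fun ω => (f ω).re) 2 P :=
  Complex.reCLM.comp_memLp' hf

lemma aux_im_memlp {Ω : Type*} [MeasurableSpace Ω] (P : Measure Ω)
    {f : Ω → ℂ} (hf : MemLp f 2 P) : MemLp (fun ω => (f ω).im) 2 P :=
  Complex.imCLM.comp_memLp' hf


/-- Distributionally robust chance constraint with known mean and an upper bound
`L` (in the Loewner order) on the covariance of the stacked real representation
`[Re d; Im d]`: if `Re(Σ_j μ_{d,j} z_j) + √(p/(1−p))·√(wᵀ L w) ≤ 0` with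
`w = [Re z; −Im z]`, then `P[Re(Σ_j d_j z_j) ≤ 0] ≥ p`. -/
theorem stmt_10 {Ω : Type*} [MeasurableSpace Ω] (P : Measure Ω) [IsProbabilityMeasure P]
    (m : ℕ) (d : Ω → Fin m → ℂ) (hd : ∀ j, MemLp (fun ω => d ω j) 2 P)
    (μd : Fin m → ℂ) (hμ : ∀ j, (∫ ω, d ω j ∂P) = μd j)
    (Sg L : Matrix (Fin m ⊕ Fin m) (Fin m ⊕ Fin m) ℝ)
    (hSg : ∀ a b, Sg a b = ∫ ω,
        (Sum.elim (fun j => (d ω j).re - (μd j).re) (fun j => (d ω j).im - (μd j).im) a)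
        * (Sum.elim (fun j => (d ω j).re - (μd j).re) (fun j => (d ω j).im - (μd j).im) b) ∂P)
    (hL : L.IsSymm) (hLoewner : (L - Sg).PosSemidef)
    (p : ℝ) (hp : p ∈ Set.Ioo (0:ℝ) 1) (z : Fin m → ℂ)
    (w : Fin m ⊕ Fin m → ℝ)
    (hw : w = Sum.elim (fun j => (z j).re) (fun j => -(z j).im))
    (h : (∑ j, μd j * z j).re
        + Real.sqrt (p / (1 - p)) * Real.sqrt (∑ a, ∑ b, w a * L a b * w b) ≤ 0) :
    p ≤ (P {ω | (∑ j, d ω j * z j).re ≤ 0}).toReal := by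
  obtain ⟨hp0, hp1⟩ := hp
  -- centered stacked components
  set C : (Fin m ⊕ Fin m) → Ω → ℝ := fun a ω =>
    Sum.elim (fun j => (d ω j).re - (μd j).re) (fun j => (d ω j).im - (μd j).im) a with hCdef
  have hC2 : ∀ a, MemLp (C a) 2 P := by
    rintro (j | j)
    · exact (aux_re_memlp P (hd j)).sub (memLp_const _)
    · exact (aux_im_memlp P (hd j)).sub (memLp_const _)
  have hdint : ∀ j, Integrable (fun ω => d ω j) P := fun j => (hd j).integrable one_le_two
  have hC0 : ∀ a, ∫ ω, C a ω ∂P = 0 := by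
    rintro (j | j)
    · have hre : ∫ ω, (d ω j).re ∂P = (∫ ω, d ω j ∂P).re := by
        simpa using integral_re (𝕜 := ℂ) (hdint j)
      have hint : Integrable (fun ω => (d ω j).re) P :=
        (aux_re_memlp P (hd j)).integrable one_le_two
      simp only [hCdef, Sum.elim_inl]
      rw [integral_sub hint (integrable_const _), hre, hμ j]
      simp
    · have him : ∫ ω, (d ω j).im ∂P = (∫ ω, d ω j ∂P).im := by
        simpa using integral_im (𝕜 := ℂ) (hdint j)
      have hint : Integrable (fun ω => (d ω j).im) P :=
        (aux_im_memlp P (hd j)).integrable one_le_two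
      simp only [hCdef, Sum.elim_inr]
      rw [integral_sub hint (integrable_const _), him, hμ j]
      simp
  set Y : Ω → ℝ := fun ω => ∑ a, w a * C a ω with hYdef
  set μX : ℝ := (∑ j, μd j * z j).re with hμX
  have key : ∀ ω, (∑ j, d ω j * z j).re = Y ω + μX := by
    intro ω
    simp only [hYdef, hμX, hw, Complex.re_sum, Complex.mul_re, Fintype.sum_sum_type,
      Sum.elim_inl, Sum.elim_inr, hCdef]
    rw [← Finset.sum_add_distrib, ← Finset.sum_add_distrib]
    exact Finset.sum_congr rfl (fun j _ => by ring)
  have hY2 : MemLp Y 2 P := by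
    have hs := memLp_finset_sum' (μ := P) (p := 2) Finset.univ
      (fun a (_ : a ∈ Finset.univ) => (hC2 a).const_mul (w a))
    have he : (∑ a : Fin m ⊕ Fin m, fun ω => w a * C a ω) = Y := by
      funext ω; simp [hYdef]
    rwa [he] at hs
  have hYint : Integrable Y P := hY2.integrable one_le_two
  have hY0 : ∫ ω, Y ω ∂P = 0 := by
    rw [integral_finset_sum _ (fun a _ => ((hC2 a).integrable one_le_two).const_mul (w a))]
    simp only [integral_const_mul]
    simp [hC0]
  set σ2 : ℝ := ∫ ω, (Y ω)^2 ∂P with hσ2def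
  have hσ2nonneg : 0 ≤ σ2 := integral_nonneg (fun ω => sq_nonneg _)
  have hprod : ∀ a b, Integrable (fun ω => C a ω * C b ω) P :=
    fun a b => aux_int_mul P (hC2 a) (hC2 b)
  have hYsqint : Integrable (fun ω => (Y ω)^2) P := by
    have := aux_int_mul P hY2 hY2
    simpa [sq] using this
  have hσ2 : σ2 = ∑ a, ∑ b, w a * Sg a b * w b := by
    have hpt : ∀ ω, (Y ω)^2 = ∑ a, ∑ b, (w a * w b) * (C a ω * C b ω) := by
      intro ω
      rw [hYdef, sq, Finset.sum_mul_sum]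
      exact Finset.sum_congr rfl fun a _ => Finset.sum_congr rfl fun b _ => by ring
    calc σ2 = ∫ ω, ∑ a, ∑ b, (w a * w b) * (C a ω * C b ω) ∂P := by
            rw [hσ2def]; exact integral_congr_ae (Filter.Eventually.of_forall hpt)
      _ = ∑ a, ∑ b, (w a * w b) * ∫ ω, C a ω * C b ω ∂P := by
            rw [integral_finset_sum _ (fun a _ => integrable_finset_sum _
              (fun b _ => (hprod a b).const_mul _))]
            exact Finset.sum_congr rfl fun a _ => by
              rw [integral_finset_sum _ (fun b _ => (hprod a b).const_mul _)]
              exact Finset.sum_congr rfl fun b _ => integral_const_mul _ _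
      _ = ∑ a, ∑ b, w a * Sg a b * w b :=
            Finset.sum_congr rfl fun a _ => Finset.sum_congr rfl fun b _ => by
              rw [hSg a b]; ring
  set Q : ℝ := ∑ a, ∑ b, w a * L a b * w b with hQdef
  have hσQ : σ2 ≤ Q := by
    have h0 : (0:ℝ) ≤ ∑ a, w a * (∑ b, (L - Sg) a b * w b) := by
      have h1 := hLoewner.dotProduct_mulVec_nonneg w
      simpa [dotProduct, Matrix.mulVec, star_trivial] using h1
    have e1 : ∑ a, w a * (∑ b, (L - Sg) a b * w b)
        = Q - ∑ a, ∑ b, w a * Sg a b * w b := by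
      rw [hQdef, ← Finset.sum_sub_distrib]
      refine Finset.sum_congr rfl fun a _ => ?_
      rw [Finset.mul_sum, ← Finset.sum_sub_distrib]
      refine Finset.sum_congr rfl fun b _ => ?_
      simp only [Matrix.sub_apply]; ring
    rw [e1] at h0
    linarith [hσ2 ▸ h0]
  have hQnonneg : 0 ≤ Q := le_trans hσ2nonneg hσQ
  set t : ℝ := -μX with htdef
  have hth : Real.sqrt (p / (1 - p)) * Real.sqrt Q ≤ t := by
    rw [htdef]; linarith [h]
  have hsq : p / (1 - p) * Q ≤ t^2 := by
    have h1 : 0 ≤ Real.sqrt (p / (1 - p)) * Real.sqrt Q :=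
      mul_nonneg (Real.sqrt_nonneg _) (Real.sqrt_nonneg _)
    have h2 := mul_self_le_mul_self h1 hth
    calc p / (1 - p) * Q
        = (Real.sqrt (p / (1 - p)) * Real.sqrt Q) * (Real.sqrt (p / (1 - p)) * Real.sqrt Q) := by
          rw [mul_mul_mul_comm, Real.mul_self_sqrt (div_nonneg hp0.le (by linarith)), Real.mul_self_sqrt hQnonneg]
      _ ≤ t * t := h2
      _ = t^2 := (sq t).symm
  have ht0 : 0 ≤ t := le_trans (mul_nonneg (Real.sqrt_nonneg _) (Real.sqrt_nonneg _)) hth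
  -- abbreviations for the two events
  set A : Set Ω := {ω | (∑ j, d ω j * z j).re ≤ 0} with hA
  have hunion : ∀ ω, ω ∈ A ∪ {ω | 0 < (∑ j, d ω j * z j).re} := by
    intro ω; by_cases hc : (∑ j, d ω j * z j).re ≤ 0
    · exact Or.inl hc
    · exact Or.inr (lt_of_not_ge hc)
  rcases eq_or_lt_of_le ht0 with ht | ht
  · -- t = 0 : degenerate case, Y = 0 a.e., X = 0 a.e.
    have hQ0 : Q = 0 := by
      have hs : Real.sqrt (p / (1 - p)) * Real.sqrt Q = 0 := le_antisymm (by rw [← ht] at hth; exact hth)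
        (mul_nonneg (Real.sqrt_nonneg _) (Real.sqrt_nonneg _))
      have hpp : Real.sqrt (p / (1 - p)) ≠ 0 :=
        ne_of_gt (Real.sqrt_pos.2 (div_pos hp0 (by linarith)))
      have := (mul_eq_zero.1 hs).resolve_left hpp
      have := (Real.sqrt_eq_zero hQnonneg).1 this
      exact this
    have hσ0 : σ2 = 0 := le_antisymm (hQ0 ▸ hσQ) hσ2nonneg
    have hYae : ∀ᵐ ω ∂P, (Y ω)^2 = 0 := by
      have := (integral_eq_zero_iff_of_nonneg (fun ω => sq_nonneg (Y ω)) hYsqint).1 hσ0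
      filter_upwards [this] with ω hω using hω
    have hXae : ∀ᵐ ω ∂P, (∑ j, d ω j * z j).re ≤ 0 := by
      filter_upwards [hYae] with ω hω
      have hY0' : Y ω = 0 := by nlinarith [sq_nonneg (Y ω)]
      rw [key ω, hY0']
      have : μX = 0 := by rw [← neg_eq_zero, ← htdef, ht]
      simp [this]
    have hAc : P Aᶜ = 0 := by
      have h2 := MeasureTheory.ae_iff.1 hXae
      simpa [hA, Set.compl_setOf] using h2
    have h1 : (1:ENNReal) ≤ P A := by
      have := measure_union_le (μ := P) A Aᶜ
      rw [Set.union_compl_self, measure_univ, hAc, add_zero] at this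
      exact this
    have : P A = 1 := le_antisymm prob_le_one h1
    rw [this]; simp; linarith
  · -- t > 0 : Cantelli
    set u : ℝ := σ2 / t with hu
    have hu0 : 0 ≤ u := div_nonneg hσ2nonneg (le_of_lt ht)
    have htu : 0 < t + u := by linarith
    set f : Ω → ℝ := fun ω => (Y ω + u)^2 with hf
    have hfint : Integrable f P := by
      have h2 : MemLp (fun ω => Y ω + u) 2 P := hY2.add (memLp_const u)
      have := aux_int_mul P h2 h2
      simpa [hf, sq] using this
    have hfI : ∫ ω, f ω ∂P = σ2 + u^2 := by
      have hpt : ∀ ω, f ω = (Y ω)^2 + (2*u) * Y ω + u^2 := fun ω => by rw [hf]; ring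
      have i1 : Integrable (fun ω => (2*u) * Y ω) P := hYint.const_mul _
      have i12 : Integrable (fun ω => (Y ω)^2 + (2*u) * Y ω) P := hYsqint.add i1
      rw [integral_congr_ae (Filter.Eventually.of_forall hpt),
        integral_add i12 (integrable_const _), integral_add hYsqint i1,
        integral_const_mul, hY0]
      simp [hσ2def]
    have hmarkov := mul_meas_ge_le_integral_of_nonneg
      (Filter.Eventually.of_forall (fun ω => sq_nonneg (Y ω + u))) hfint ((t+u)^2)
    have hsubset : {ω | 0 < (∑ j, d ω j * z j).re} ⊆ {ω | (t+u)^2 ≤ f ω} := by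
      intro ω hω
      simp only [Set.mem_setOf_eq] at hω ⊢
      rw [key ω] at hω
      have hYt : t ≤ Y ω := by rw [htdef] at *; linarith
      have : t + u ≤ Y ω + u := by linarith
      rw [hf]
      exact pow_le_pow_left₀ (le_of_lt htu) this 2
    have hB : (P {ω | 0 < (∑ j, d ω j * z j).re}).toReal ≤ (σ2 + u^2) / (t+u)^2 := by
      have hmono := measure_mono (μ := P) hsubset
      have hfin : P {ω | (t+u)^2 ≤ f ω} ≠ ⊤ := measure_ne_top _ _
      have htr : (P {ω | 0 < (∑ j, d ω j * z j).re}).toReal ≤ (P {ω | (t+u)^2 ≤ f ω}).toReal :=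
        ENNReal.toReal_mono hfin hmono
      have hpos : (0:ℝ) < (t+u)^2 := pow_pos htu 2
      rw [hfI] at hmarkov
      calc (P {ω | 0 < (∑ j, d ω j * z j).re}).toReal
          ≤ (P {ω | (t+u)^2 ≤ f ω}).toReal := htr
        _ ≤ (σ2 + u^2) / (t+u)^2 := by
            rw [le_div_iff₀ hpos]; rw [measureReal_def] at hmarkov; exact (mul_comm _ _).trans_le hmarkov
    have hratio : (σ2 + u^2) / (t+u)^2 ≤ 1 - p := by
      have hts : p * σ2 ≤ (1 - p) * t^2 := by
        have h1p : (0:ℝ) < 1 - p := by linarith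
        have := hsq
        have h2 : p / (1 - p) * σ2 ≤ p / (1 - p) * Q :=
          mul_le_mul_of_nonneg_left hσQ (by positivity)
        have h3 : p / (1 - p) * σ2 ≤ t^2 := le_trans h2 this
        calc p * σ2 = (1 - p) * (p / (1 - p) * σ2) := by field_simp
          _ ≤ (1 - p) * t^2 := mul_le_mul_of_nonneg_left h3 (le_of_lt h1p)
      have hut : u * t = σ2 := by
        rw [hu, div_mul_cancel₀ _ (ne_of_gt ht)]
      have hts' : p * (u * t) ≤ (1 - p) * t^2 := by rw [hut]; exact hts
      rw [div_le_iff₀ (pow_pos htu 2)]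
      rw [← hut]
      nlinarith [mul_nonneg (sub_nonneg.2 hts') hu0, mul_nonneg (sub_nonneg.2 hts') ht.le,
        mul_nonneg hu0 ht.le, mul_nonneg (mul_nonneg hu0 hu0) ht.le,
        mul_nonneg (mul_nonneg hu0 ht.le) ht.le, ht, hu0, hp0.le, hp1.le]
    have hsum : (1:ℝ) ≤ (P A).toReal + (P {ω | 0 < (∑ j, d ω j * z j).re}).toReal := by
      have := measure_union_le (μ := P) A {ω | 0 < (∑ j, d ω j * z j).re}
      have huniv : P (A ∪ {ω | 0 < (∑ j, d ω j * z j).re}) = 1 := by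
        rw [Set.eq_univ_of_forall hunion, measure_univ]
      rw [huniv] at this
      have := ENNReal.toReal_mono (by finiteness) this
      rwa [ENNReal.toReal_one, ENNReal.toReal_add (measure_ne_top _ _) (measure_ne_top _ _)] at this
    linarith [le_trans hB hratio]
end

section
/- Let w_1, …, w_n be independent complex-valued random variables with E[w_j] = 0 and |w_j| ≤ l_j almost surely, where l_j ≥ 0. Let z ∈ ℂ^n, μ ∈ ℝ with μ ≤ 0, and p ∈ (0,1). If √(2 ln(1/(1−p))) · √(Σ_{j=1}^n l_j² |z_j|²) + μ ≤ 0, then P[μ + Σ_{j=1}^n Re(w_j z_j) ≤ 0] ≥ p. -/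
open MeasureTheory ProbabilityTheory Finset


/-- pointwise convexity bound -/
lemma exp_le_cosh_add (t a x : ℝ) (ha : 0 < a) (hx : |x| ≤ a) :
    Real.exp (t * x) ≤ Real.cosh (t * a) + x * (Real.sinh (t * a) / a) := by
  have hx1 : -a ≤ x := neg_le_of_abs_le hx
  have hx2 : x ≤ a := le_of_abs_le hx
  have w1 : (0:ℝ) ≤ (a - x) / (2 * a) := by
    apply div_nonneg (by linarith) (by linarith)
  have w2 : (0:ℝ) ≤ (a + x) / (2 * a) := by
    apply div_nonneg (by linarith) (by linarith)
  have wsum : (a - x) / (2 * a) + (a + x) / (2 * a) = 1 := by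
    field_simp; ring
  have hc := convexOn_exp.2 (Set.mem_univ (t * (-a))) (Set.mem_univ (t * a)) w1 w2 wsum
  simp only [smul_eq_mul] at hc
  have harg : (a - x) / (2 * a) * (t * (-a)) + (a + x) / (2 * a) * (t * a) = t * x := by
    rw [div_mul_eq_mul_div, div_mul_eq_mul_div, ← add_div,
      div_eq_iff (by positivity : (2:ℝ) * a ≠ 0)]
    ring
  rw [harg] at hc
  refine hc.trans (le_of_eq ?_)
  rw [Real.cosh_eq, Real.sinh_eq]
  have : t * -a = -(t * a) := by ring
  rw [this]
  field_simp
  ring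

/-- Hoeffding's lemma -/
lemma hoeffding_mgf {Ω : Type*} [MeasurableSpace Ω] (P : Measure Ω) [IsProbabilityMeasure P]
    (X : Ω → ℝ) (hX : Measurable X) (a : ℝ) (ha : 0 ≤ a)
    (hb : ∀ᵐ ω ∂P, |X ω| ≤ a) (hm : ∫ ω, X ω ∂P = 0) (t : ℝ) :
    mgf X P t ≤ Real.exp (t ^ 2 * a ^ 2 / 2) := by
  rcases ha.eq_or_lt with h0 | hapos
  · -- a = 0, X = 0 a.s.
    have hX0 : ∀ᵐ ω ∂P, X ω = 0 := by
      filter_upwards [hb] with ω hω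
      rw [← h0] at hω
      exact abs_eq_zero.mp (le_antisymm hω (abs_nonneg _))
    have : mgf X P t = ∫ ω, (1:ℝ) ∂P := by
      unfold mgf
      refine integral_congr_ae ?_
      filter_upwards [hX0] with ω hω
      simp [hω]
    rw [this]
    simp
    positivity
  · have hXint : Integrable X P :=
      ⟨hX.aestronglyMeasurable, HasFiniteIntegral.of_bounded (C := a) (by
        filter_upwards [hb] with ω hω; simpa using hω)⟩
    have hEint : Integrable (fun ω => Real.exp (t * X ω)) P :=
      ⟨((hX.const_mul t).exp).aestronglyMeasurable,
        HasFiniteIntegral.of_bounded (C := Real.exp (|t| * a)) (by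
          filter_upwards [hb] with ω hω
          rw [Real.norm_eq_abs, Real.abs_exp]
          apply Real.exp_le_exp.mpr
          calc t * X ω ≤ |t * X ω| := le_abs_self _
            _ = |t| * |X ω| := abs_mul _ _
            _ ≤ |t| * a := by apply mul_le_mul_of_nonneg_left hω (abs_nonneg t))⟩
    have key : mgf X P t ≤ Real.cosh (t * a) + (∫ ω, X ω ∂P) * (Real.sinh (t * a) / a) := by
      unfold mgf
      have hle : ∀ᵐ ω ∂P, Real.exp (t * X ω) ≤
          Real.cosh (t * a) + X ω * (Real.sinh (t * a) / a) := by
        filter_upwards [hb] with ω hω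
        exact exp_le_cosh_add t a (X ω) hapos hω
      calc ∫ ω, Real.exp (t * X ω) ∂P
          ≤ ∫ ω, (Real.cosh (t * a) + X ω * (Real.sinh (t * a) / a)) ∂P := by
            refine integral_mono_ae hEint ?_ hle
            exact (integrable_const _).add (hXint.mul_const _)
        _ = (∫ ω, Real.cosh (t*a) ∂P) + ∫ ω, X ω * (Real.sinh (t * a) / a) ∂P := by
            rw [integral_add (integrable_const _) (hXint.mul_const _)]
        _ = Real.cosh (t * a) + ∫ ω, X ω * (Real.sinh (t * a) / a) ∂P := by simp
        _ = Real.cosh (t * a) + (∫ ω, X ω ∂P) * (Real.sinh (t * a) / a) := by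
            rw [integral_mul_const]
    rw [hm, zero_mul, add_zero] at key
    refine key.trans ?_
    calc Real.cosh (t * a) ≤ Real.exp ((t * a) ^ 2 / 2) := Real.cosh_le_exp_half_sq _
      _ = Real.exp (t ^ 2 * a ^ 2 / 2) := by rw [mul_pow]

/-- Hoeffding-based support-robust chance constraint: for independent zero-mean
complex random variables `w j` with `|w j| ≤ l j` a.s., if
`√(2 ln(1/(1−p)))·√(Σ_j l_j² |z_j|²) + μ ≤ 0` with `μ ≤ 0`, then
`P[μ + Σ_j Re(w_j z_j) ≤ 0] ≥ p`. -/
theorem stmt_13 {Ω : Type*} [MeasurableSpace Ω] (P : Measure Ω) [IsProbabilityMeasure P]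
    (n : ℕ) (w : Fin n → Ω → ℂ) (hmeas : ∀ j, Measurable (w j))
    (hindep : iIndepFun w P)
    (l : Fin n → ℝ) (hl : ∀ j, 0 ≤ l j)
    (hbound : ∀ j, ∀ᵐ ω ∂P, ‖w j ω‖ ≤ l j)
    (hmean : ∀ j, (∫ ω, w j ω ∂P) = 0)
    (z : Fin n → ℂ) (μ : ℝ) (hμ : μ ≤ 0) (p : ℝ) (hp : p ∈ Set.Ioo (0:ℝ) 1)
    (h : Real.sqrt (2 * Real.log (1 / (1 - p)))
          * Real.sqrt (∑ j, (l j) ^ 2 * ‖z j‖ ^ 2) + μ ≤ 0) :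
    p ≤ (P {ω | μ + ∑ j, (w j ω * z j).re ≤ 0}).toReal := by
  classical
  set ξ : Fin n → Ω → ℝ := fun j ω => (w j ω * z j).re with hξ
  set a : Fin n → ℝ := fun j => l j * ‖z j‖ with ha
  have hanneg : ∀ j, 0 ≤ a j := fun j => mul_nonneg (hl j) (norm_nonneg _)
  have hmeasξ : ∀ j, Measurable (ξ j) := fun j =>
    Complex.measurable_re.comp ((hmeas j).mul_const _)
  have hboundξ : ∀ j, ∀ᵐ ω ∂P, |ξ j ω| ≤ a j := by
    intro j
    filter_upwards [hbound j] with ω hω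
    calc |(w j ω * z j).re| ≤ ‖w j ω * z j‖ := Complex.abs_re_le_norm _
      _ = ‖w j ω‖ * ‖z j‖ := norm_mul _ _
      _ ≤ l j * ‖z j‖ := by
          apply mul_le_mul_of_nonneg_right hω (norm_nonneg _)
  have hwint : ∀ j, Integrable (w j) P := fun j =>
    ⟨(hmeas j).aestronglyMeasurable, HasFiniteIntegral.of_bounded (C := l j) (by
      filter_upwards [hbound j] with ω hω; simpa using hω)⟩
  have hmeanξ : ∀ j, ∫ ω, ξ j ω ∂P = 0 := by
    intro j
    have h1 : ∫ ω, w j ω * z j ∂P = 0 := by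
      have : (fun ω => w j ω * z j) = fun ω => z j • w j ω := by
        funext ω; simp [smul_eq_mul, mul_comm]
      rw [this, integral_smul, hmean j, smul_zero]
    have h2 : ∫ ω, (w j ω * z j).re ∂P = (∫ ω, w j ω * z j ∂P).re := by
      simpa using integral_re ((hwint j).mul_const (z j))
    rw [show (∫ ω, ξ j ω ∂P) = ∫ ω, (w j ω * z j).re ∂P from rfl, h2, h1]
    rfl
  set S : ℝ := ∑ j, a j ^ 2 with hS
  have hSeq : S = ∑ j, (l j) ^ 2 * ‖z j‖ ^ 2 := by
    simp [hS, ha, mul_pow]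
  have hSnn : 0 ≤ S := Finset.sum_nonneg fun j _ => sq_nonneg _
  have hmeassum : Measurable (fun ω => ∑ j, ξ j ω) := by
    exact Finset.measurable_sum _ fun j _ => hmeasξ j
  have hAmeas : MeasurableSet {ω | μ + ∑ j, (w j ω * z j).re ≤ 0} := by
    exact measurableSet_le (by measurability) measurable_const
  rcases hSnn.eq_or_lt with hS0 | hSpos
  · -- degenerate: all a j = 0, so ξ j = 0 a.s.
    have haj : ∀ j, a j = 0 := by
      intro j
      have h2 := (Finset.sum_eq_zero_iff_of_nonneg (fun j _ => sq_nonneg (a j))).mp hS0.symm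
        j (Finset.mem_univ j)
      exact (pow_eq_zero_iff two_ne_zero).mp h2
    have hae : ∀ᵐ ω ∂P, ω ∈ {ω | μ + ∑ j, (w j ω * z j).re ≤ 0} := by
      have : ∀ᵐ ω ∂P, ∀ j, |ξ j ω| ≤ a j := ae_all_iff.mpr hboundξ
      filter_upwards [this] with ω hω
      have : ∀ j, ξ j ω = 0 := by
        intro j
        have := hω j; rw [haj j] at this
        exact abs_eq_zero.mp (le_antisymm this (abs_nonneg _))
      show μ + ∑ j, (w j ω * z j).re ≤ 0
      have : ∑ j, (w j ω * z j).re = 0 := Finset.sum_eq_zero fun j _ => this j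
      linarith
    have : P {ω | μ + ∑ j, (w j ω * z j).re ≤ 0} = 1 := by
      rw [← measure_univ (μ := P)]
      apply measure_congr
      filter_upwards [hae] with ω hω
      exact eq_true hω
    rw [this]
    simpa using hp.2.le
  · -- main case
    set L : ℝ := Real.log (1 / (1 - p)) with hL
    have hq : 0 < 1 - p := by linarith [hp.2]
    have hLpos : 0 < L := Real.log_pos (by rw [lt_div_iff₀ hq]; linarith [hp.1])
    have hsqS : 0 < Real.sqrt S := Real.sqrt_pos.mpr hSpos
    set ε : ℝ := -μ with hε
    have hεge : Real.sqrt (2 * L) * Real.sqrt S ≤ ε := by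
      rw [hSeq]; linarith
    have hεpos : 0 < ε := lt_of_lt_of_le (by positivity) hεge
    set t : ℝ := ε / S with ht
    have htpos : 0 < t := div_pos hεpos hSpos
    -- independence of the real projections
    have hindepξ : iIndepFun ξ P := by
      have := hindep.comp (fun j (x : ℂ) => (x * z j).re)
        (fun j => Complex.measurable_re.comp (measurable_mul_const _))
      exact this
    -- the sum as a function
    set Xs : Ω → ℝ := ∑ j ∈ Finset.univ, ξ j with hXs
    have hXs_eq : Xs = fun ω => ∑ j, ξ j ω := by
      funext ω; simp [hXs, Finset.sum_apply]
    have hXsmeas : Measurable Xs := by rw [hXs_eq]; exact hmeassum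
    have hXsbound : ∀ᵐ ω ∂P, |Xs ω| ≤ ∑ j, a j := by
      have hall : ∀ᵐ ω ∂P, ∀ j, |ξ j ω| ≤ a j := ae_all_iff.mpr hboundξ
      filter_upwards [hall] with ω hω
      rw [hXs_eq]
      calc |∑ j, ξ j ω| ≤ ∑ j, |ξ j ω| := Finset.abs_sum_le_sum_abs _ _
        _ ≤ ∑ j, a j := Finset.sum_le_sum fun j _ => hω j
    have hint : Integrable (fun ω => Real.exp (t * Xs ω)) P :=
      ⟨((hXsmeas.const_mul t).exp).aestronglyMeasurable,
        HasFiniteIntegral.of_bounded (C := Real.exp (|t| * ∑ j, a j)) (by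
          filter_upwards [hXsbound] with ω hω
          rw [Real.norm_eq_abs, Real.abs_exp]
          apply Real.exp_le_exp.mpr
          calc t * Xs ω ≤ |t * Xs ω| := le_abs_self _
            _ = |t| * |Xs ω| := abs_mul _ _
            _ ≤ |t| * ∑ j, a j := mul_le_mul_of_nonneg_left hω (abs_nonneg t))⟩
    -- mgf bound
    have hmgf : mgf Xs P t ≤ Real.exp (t ^ 2 * S / 2) := by
      rw [hXs, iIndepFun.mgf_sum hindepξ hmeasξ]
      calc ∏ j, mgf (ξ j) P t ≤ ∏ j, Real.exp (t ^ 2 * (a j) ^ 2 / 2) :=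
            Finset.prod_le_prod (fun j _ => mgf_nonneg) (fun j _ =>
              hoeffding_mgf P (ξ j) (hmeasξ j) (a j) (hanneg j) (hboundξ j) (hmeanξ j) t)
        _ = Real.exp (∑ j, t ^ 2 * (a j) ^ 2 / 2) := by rw [Real.exp_sum]
        _ = Real.exp (t ^ 2 * S / 2) := by
            congr 1
            rw [hS, Finset.mul_sum, Finset.sum_div]
    -- Chernoff
    have hch := measure_ge_le_exp_mul_mgf (μ := P) (X := Xs) ε htpos.le hint
    have hchain : (P {ω | ε ≤ Xs ω}).toReal ≤ 1 - p := by
      have h1 : Real.exp (-t * ε) * mgf Xs P t ≤ Real.exp (-t * ε + t ^ 2 * S / 2) := by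
        rw [Real.exp_add]
        exact mul_le_mul_of_nonneg_left hmgf (Real.exp_pos _).le
      have h2 : -t * ε + t ^ 2 * S / 2 = -(ε ^ 2 / (2 * S)) := by
        rw [ht]; field_simp; ring
      have h3 : ε ^ 2 / (2 * S) ≥ L := by
        have hsq : (Real.sqrt (2 * L) * Real.sqrt S) ^ 2 ≤ ε ^ 2 :=
          pow_le_pow_left₀ (by positivity) hεge 2
        rw [mul_pow, Real.sq_sqrt (by positivity), Real.sq_sqrt hSnn] at hsq
        rw [ge_iff_le, le_div_iff₀ (by positivity)]
        nlinarith
      have h4 : Real.exp (-(ε ^ 2 / (2 * S))) ≤ Real.exp (-L) := by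
        apply Real.exp_le_exp.mpr; linarith
      have h5 : Real.exp (-L) = 1 - p := by
        rw [hL, one_div, Real.log_inv, neg_neg, Real.exp_log hq]
      calc (P {ω | ε ≤ Xs ω}).toReal ≤ Real.exp (-t * ε) * mgf Xs P t := hch
        _ ≤ Real.exp (-t * ε + t ^ 2 * S / 2) := h1
        _ = Real.exp (-(ε ^ 2 / (2 * S))) := by rw [h2]
        _ ≤ Real.exp (-L) := h4
        _ = 1 - p := h5
    -- complement argument
    set A : Set Ω := {ω | μ + ∑ j, (w j ω * z j).re ≤ 0} with hA
    have hsub : Aᶜ ⊆ {ω | ε ≤ Xs ω} := by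
      intro ω hω
      simp only [hA, Set.mem_compl_iff, Set.mem_setOf_eq, not_le] at hω
      simp only [Set.mem_setOf_eq, hXs_eq, hε]
      show -μ ≤ ∑ j, (w j ω * z j).re
      linarith
    have hcompl : (P Aᶜ).toReal ≤ 1 - p :=
      le_trans (ENNReal.toReal_mono (measure_ne_top _ _) (measure_mono hsub)) hchain
    have hadd : (P A).toReal + (P Aᶜ).toReal = 1 := by
      rw [← ENNReal.toReal_add (measure_ne_top _ _) (measure_ne_top _ _),
        measure_add_measure_compl hAmeas]
      simp
    linarith
end

section
/- Let z, ξ, μ̂ ∈ ℂ^m, let Γ̂, Δ₁ ∈ ℂ^{m×m} be Hermitian, let Ĵ, Δ₂ ∈ ℂ^{m×m} be arbitrary complex matrices, and let k ≥ 0, r₁ ≥ 0, r₂ ≥ 0 be real numbers with ‖ξ‖ ≤ r₁, ‖Δ₁‖_F ≤ r₂, and ‖Δ₂‖_F ≤ r₂. Assume z^H(Γ̂ + Δ₁)z + Re(z^T(Ĵ + Δ₂)z) ≥ 0 and z^H Γ̂ z + Re(z^T Ĵ z) + 2 r₂ ‖z‖² ≥ 0. Then k·√(z^H(Γ̂ +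 Δ₁)z + Re(z^T(Ĵ + Δ₂)z)) + Re((μ̂ + ξ)^H z) ≤ k·√(z^H Γ̂ z + Re(z^T Ĵ z) + 2 r₂ ‖z‖²) + Re(μ̂^H z) + r₁ ‖z‖. -/
open Finset

/-- Frobenius norm of a complex matrix. -/
noncomputable def frobNorm {m : ℕ} (M : Matrix (Fin m) (Fin m) ℂ) : ℝ :=
  Real.sqrt (∑ j, ∑ k, ‖M j k‖ ^ 2)

lemma cs_sum {ι : Type*} (s : Finset ι) (f g : ι → ℝ) (hf : ∀ i ∈ s, 0 ≤ f i)
    (hg : ∀ i ∈ s, 0 ≤ g i) :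
    ∑ i ∈ s, f i * g i ≤ Real.sqrt (∑ i ∈ s, f i ^ 2) * Real.sqrt (∑ i ∈ s, g i ^ 2) := by
  have hnn : 0 ≤ ∑ i ∈ s, f i * g i :=
    Finset.sum_nonneg fun i hi => mul_nonneg (hf i hi) (hg i hi)
  calc ∑ i ∈ s, f i * g i = Real.sqrt ((∑ i ∈ s, f i * g i) ^ 2) := (Real.sqrt_sq hnn).symm
    _ ≤ Real.sqrt ((∑ i ∈ s, f i ^ 2) * ∑ i ∈ s, g i ^ 2) :=
        Real.sqrt_le_sqrt (Finset.sum_mul_sq_le_sq_mul_sq s f g)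
    _ = _ := Real.sqrt_mul (Finset.sum_nonneg fun i _ => sq_nonneg _) _

lemma key_bound {m : ℕ} (M : Matrix (Fin m) (Fin m) ℂ) (u v : Fin m → ℂ) :
    (∑ j, ∑ k, u j * M j k * v k).re ≤
      frobNorm M * Real.sqrt (∑ j, ‖u j‖ ^ 2) *
        Real.sqrt (∑ j, ‖v j‖ ^ 2) := by
  have h1 : (∑ j, ∑ k, u j * M j k * v k).re ≤
      ∑ j, ‖u j‖ * ∑ k, ‖M j k‖ * ‖v k‖ := by
    calc (∑ j, ∑ k, u j * M j k * v k).re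
        ≤ ‖∑ j, ∑ k, u j * M j k * v k‖ := Complex.re_le_norm _
      _ ≤ ∑ j, ‖∑ k, u j * M j k * v k‖ := norm_sum_le _ _
      _ ≤ ∑ j, ∑ k, ‖u j * M j k * v k‖ :=
          Finset.sum_le_sum fun j _ => norm_sum_le _ _
      _ = ∑ j, ‖u j‖ * ∑ k, ‖M j k‖ * ‖v k‖ := by
          simp [norm_mul, Finset.mul_sum, mul_assoc]
  refine h1.trans ?_
  have h2 : ∀ j, ‖u j‖ * ∑ k, ‖M j k‖ * ‖v k‖ ≤
      ‖u j‖ * (Real.sqrt (∑ k, ‖M j k‖ ^ 2) *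
        Real.sqrt (∑ k, ‖v k‖ ^ 2)) := fun j =>
    mul_le_mul_of_nonneg_left
      (cs_sum univ _ _ (fun k _ => norm_nonneg _) (fun k _ => norm_nonneg _))
      (norm_nonneg _)
  refine (Finset.sum_le_sum fun j _ => h2 j).trans ?_
  have h3 : ∑ j, ‖u j‖ * (Real.sqrt (∑ k, ‖M j k‖ ^ 2) *
        Real.sqrt (∑ k, ‖v k‖ ^ 2)) =
      (∑ j, ‖u j‖ * Real.sqrt (∑ k, ‖M j k‖ ^ 2)) *
        Real.sqrt (∑ k, ‖v k‖ ^ 2) := by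
    rw [Finset.sum_mul]; simp [mul_assoc]
  rw [h3]
  have h4 : ∑ j, ‖u j‖ * Real.sqrt (∑ k, ‖M j k‖ ^ 2) ≤
      Real.sqrt (∑ j, ‖u j‖ ^ 2) * frobNorm M := by
    have := cs_sum univ (fun j => ‖u j‖)
      (fun j => Real.sqrt (∑ k, ‖M j k‖ ^ 2))
      (fun j _ => norm_nonneg _) (fun j _ => Real.sqrt_nonneg _)
    refine this.trans_eq ?_
    congr 1
    unfold frobNorm
    congr 1
    exact Finset.sum_congr rfl fun j _ => Real.sq_sqrt (Finset.sum_nonneg fun k _ => sq_nonneg _)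
  calc _ ≤ (Real.sqrt (∑ j, ‖u j‖ ^ 2) * frobNorm M) *
        Real.sqrt (∑ k, ‖v k‖ ^ 2) :=
      mul_le_mul_of_nonneg_right h4 (Real.sqrt_nonneg _)
    _ = _ := by ring

lemma vec_bound {m : ℕ} (u v : Fin m → ℂ) :
    (∑ j, star (u j) * v j).re ≤
      Real.sqrt (∑ j, ‖u j‖ ^ 2) * Real.sqrt (∑ j, ‖v j‖ ^ 2) := by
  calc (∑ j, star (u j) * v j).re ≤ ‖∑ j, star (u j) * v j‖ := Complex.re_le_norm _
    _ ≤ ∑ j, ‖star (u j) * v j‖ := norm_sum_le _ _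
    _ = ∑ j, ‖u j‖ * ‖v j‖ := by
        simp [norm_mul]
    _ ≤ _ := cs_sum univ _ _ (fun j _ => norm_nonneg _) (fun j _ => norm_nonneg _)

/-- Robustification inequality for the data-driven reformulation: the
mean-plus-scaled-standard-deviation expression evaluated at perturbed moments
`(μ̂ + ξ, Γ̂ + Δ₁, Ĵ + Δ₂)` is bounded by the inflated nominal expression,
uniformly over `‖ξ‖ ≤ r₁`, `‖Δ₁‖_F ≤ r₂`, `‖Δ₂‖_F ≤ r₂`. -/
theorem stmt_16 (m : ℕ) (z ξ μhat : Fin m → ℂ)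
    (Γ Δ₁ Jm Δ₂ : Matrix (Fin m) (Fin m) ℂ)
    (hΓ : Γ.IsHermitian) (hΔ₁ : Δ₁.IsHermitian)
    (k r₁ r₂ : ℝ) (hk : 0 ≤ k) (hr₁ : 0 ≤ r₁) (hr₂ : 0 ≤ r₂)
    (hξ : Real.sqrt (∑ j, ‖ξ j‖ ^ 2) ≤ r₁)
    (hΔ1F : frobNorm Δ₁ ≤ r₂) (hΔ2F : frobNorm Δ₂ ≤ r₂)
    (h1 : 0 ≤ (∑ j, ∑ k', star (z j) * (Γ + Δ₁) j k' * z k').re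
        + (∑ j, ∑ k', z j * (Jm + Δ₂) j k' * z k').re)
    (h2 : 0 ≤ (∑ j, ∑ k', star (z j) * Γ j k' * z k').re
        + (∑ j, ∑ k', z j * Jm j k' * z k').re
        + 2 * r₂ * (∑ j, ‖z j‖ ^ 2)) :
    k * Real.sqrt ((∑ j, ∑ k', star (z j) * (Γ + Δ₁) j k' * z k').re
          + (∑ j, ∑ k', z j * (Jm + Δ₂) j k' * z k').re)
      + (∑ j, star (μhat j + ξ j) * z j).re
    ≤ k * Real.sqrt ((∑ j, ∑ k', star (z j) * Γ j k' * z k').re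
          + (∑ j, ∑ k', z j * Jm j k' * z k').re
          + 2 * r₂ * (∑ j, ‖z j‖ ^ 2))
      + (∑ j, star (μhat j) * z j).re
      + r₁ * Real.sqrt (∑ j, ‖z j‖ ^ 2) := by
  set N : ℝ := Real.sqrt (∑ j, ‖z j‖ ^ 2) with hN
  have hNsq : N * N = ∑ j, ‖z j‖ ^ 2 :=
    Real.mul_self_sqrt (Finset.sum_nonneg fun j _ => sq_nonneg _)
  -- star z abs = z abs
  have habs : ∀ j, ‖star (z j)‖ ^ 2 = ‖z j‖ ^ 2 := by
    intro j; simp [norm_star]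
  -- bound for Δ₁ quadratic form
  have hq1 : (∑ j, ∑ k', star (z j) * Δ₁ j k' * z k').re ≤ r₂ * ∑ j, ‖z j‖ ^ 2 := by
    have := key_bound Δ₁ (fun j => star (z j)) z
    simp only [habs] at this
    refine this.trans ?_
    rw [mul_assoc, hNsq]
    exact mul_le_mul_of_nonneg_right hΔ1F (Finset.sum_nonneg fun j _ => sq_nonneg _)
  have hq2 : (∑ j, ∑ k', z j * Δ₂ j k' * z k').re ≤ r₂ * ∑ j, ‖z j‖ ^ 2 := by
    have := key_bound Δ₂ z z
    refine this.trans ?_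
    rw [mul_assoc, hNsq]
    exact mul_le_mul_of_nonneg_right hΔ2F (Finset.sum_nonneg fun j _ => sq_nonneg _)
  -- expand sums
  have hexp1 : (∑ j, ∑ k', star (z j) * (Γ + Δ₁) j k' * z k')
      = (∑ j, ∑ k', star (z j) * Γ j k' * z k') + (∑ j, ∑ k', star (z j) * Δ₁ j k' * z k') := by
    rw [← Finset.sum_add_distrib]
    refine Finset.sum_congr rfl fun j _ => ?_
    rw [← Finset.sum_add_distrib]
    refine Finset.sum_congr rfl fun k' _ => ?_
    simp [Matrix.add_apply]; ring
  have hexp2 : (∑ j, ∑ k', z j * (Jm + Δ₂) j k' * z k')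
      = (∑ j, ∑ k', z j * Jm j k' * z k') + (∑ j, ∑ k', z j * Δ₂ j k' * z k') := by
    rw [← Finset.sum_add_distrib]
    refine Finset.sum_congr rfl fun j _ => ?_
    rw [← Finset.sum_add_distrib]
    refine Finset.sum_congr rfl fun k' _ => ?_
    simp [Matrix.add_apply]; ring
  have hsqrt : Real.sqrt ((∑ j, ∑ k', star (z j) * (Γ + Δ₁) j k' * z k').re
          + (∑ j, ∑ k', z j * (Jm + Δ₂) j k' * z k').re)
      ≤ Real.sqrt ((∑ j, ∑ k', star (z j) * Γ j k' * z k').re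
          + (∑ j, ∑ k', z j * Jm j k' * z k').re
          + 2 * r₂ * (∑ j, ‖z j‖ ^ 2)) := by
    apply Real.sqrt_le_sqrt
    rw [hexp1, hexp2, Complex.add_re, Complex.add_re]
    have := add_le_add hq1 hq2
    linarith
  -- mean term
  have hmean : (∑ j, star (μhat j + ξ j) * z j).re
      ≤ (∑ j, star (μhat j) * z j).re + r₁ * N := by
    have hsplit : (∑ j, star (μhat j + ξ j) * z j)
        = (∑ j, star (μhat j) * z j) + (∑ j, star (ξ j) * z j) := by
      rw [← Finset.sum_add_distrib]
      refine Finset.sum_congr rfl fun j _ => ?_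
      simp [add_mul]
    rw [hsplit, Complex.add_re]
    have := (vec_bound ξ z).trans
      (mul_le_mul_of_nonneg_right hξ (Real.sqrt_nonneg _))
    linarith
  have := mul_le_mul_of_nonneg_left hsqrt hk
  linarith
end
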